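/- arXiv:2503.06905 — 7 statements merged into one kernel-verified Lean document; each statement's English description precedes it below -/
import Mathlib

section
/- Let X be a normed space and f, g ∈ S_{X*} (norm-one functionals). Let 0 < ε < 1 and let A = {x ∈ B_X : f(x) > ε/2}. If inf g(A) > 0, then ‖f − g‖ < ε. -/
open Metric Set Pointwise

variable {X : Type*} [NormedAddCommGroup X] [NormedSpace ℝ X]

/-- The seminorm `‖f‖_A = sup {|f x| : x ∈ A}` on the dual. -/
noncomputable def dualSeminormOn (A : Set X) (f : X →L[ℝ] ℝ) : ℝ :=
  sSup ((fun x => |f x|) '' A)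

/-- The ball `B_A(f, ε)` for the seminorm `‖·‖_A`. -/
noncomputable def seminormBall (A : Set X) (f : X →L[ℝ] ℝ) (ε : ℝ) :
    Set (X →L[ℝ] ℝ) :=
  {g | dualSeminormOn A (g - f) < ε}

/-- `cone C = {λ • h : λ > 0, h ∈ C}`. -/
def coneOf (C : Set (X →L[ℝ] ℝ)) : Set (X →L[ℝ] ℝ) :=
  {g | ∃ l : ℝ, 0 < l ∧ ∃ h ∈ C, g = l • h}

/-- A set of functionals is weak*-open if it is open in the weak* topology. -/
def IsWeakStarOpen (U : Set (X →L[ℝ] ℝ)) : Prop :=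
  IsOpen (show Set (WeakDual ℝ X) from U)

/-- A compatible collection of bounded sets. -/
structure IsCompatible (𝒜 : Set (Set X)) : Prop where
  bounded : ∀ A ∈ 𝒜, Bornology.IsBounded A
  mem_of_subset : ∀ A ∈ 𝒜, ∀ C, C ⊆ A → C ∈ 𝒜
  translate_mem : ∀ A ∈ 𝒜, ∀ x : X, ((fun a => a + x) '' A) ∈ 𝒜
  union_singleton_mem : ∀ A ∈ 𝒜, ∀ x : X, (A ∪ {x}) ∈ 𝒜
  closure_absConvexHull_mem : ∀ A ∈ 𝒜, closure (absConvexHull ℝ A) ∈ 𝒜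

/-- `f₀` is an `𝒜`-semi point of continuity of `B_{X*}`. -/
def IsASemiPC (𝒜 : Set (Set X)) (f₀ : X →L[ℝ] ℝ) : Prop :=
  ∀ A ∈ 𝒜, ∀ ε > (0 : ℝ), ∃ U : Set (X →L[ℝ] ℝ), IsWeakStarOpen U ∧
    (U ∩ closedBall 0 1).Nonempty ∧
    U ∩ closedBall 0 1 ⊆ coneOf (seminormBall A f₀ ε)

/-- `f₀` is a strong `𝒜`-semi point of continuity of `B_{X*}`. -/
def IsStrongASemiPC (𝒜 : Set (Set X)) (f₀ : X →L[ℝ] ℝ) : Prop :=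
  ∀ A ∈ 𝒜, ∀ ε > (0 : ℝ), ∃ U : Set (X →L[ℝ] ℝ), IsWeakStarOpen U ∧
    (U ∩ closedBall 0 1).Nonempty ∧
    U ∩ closedBall 0 1 ⊆ seminormBall A f₀ ε

/-- A set is the closed convex hull of finitely many closed balls. -/
def IsFinBallHull (S : Set X) : Prop :=
  ∃ (n : ℕ) (c : Fin n → X) (r : Fin n → ℝ),
    S = closure (convexHull ℝ (⋃ i, closedBall (c i) (r i)))

/-- `X` has `𝒜`-Property (II). -/
def HasAPropertyII (𝒜 : Set (Set X)) : Prop :=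
  ∀ A ∈ 𝒜, IsClosed A → Convex ℝ A →
    ∃ ℱ : Set (Set X), (∀ S ∈ ℱ, IsFinBallHull S) ∧ A = ⋂₀ ℱ

/-- `X` has strong `𝒜`-Property (II). -/
def HasStrongAPropertyII (𝒜 : Set (Set X)) : Prop :=
  ∀ A ∈ 𝒜, Convex ℝ A → ∀ β : ℝ, 0 ≤ β →
    ∃ ℱ : Set (Set X), (∀ S ∈ ℱ, IsFinBallHull S) ∧
      closure (A + β • closedBall (0 : X) 1) = ⋂₀ ℱ


lemma exists_near_norming {X' : Type*} [NormedAddCommGroup X'] [NormedSpace ℝ X']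
    (F : X' →L[ℝ] ℝ) (hF : ‖F‖ = 1) {η : ℝ} (hη : 0 < η) :
    ∃ y : X', ‖y‖ ≤ 1 ∧ 1 - η < F y := by
  obtain ⟨y₀, hy₀, hFy₀⟩ := F.exists_lt_apply_of_lt_opNorm (r := 1 - η)
    (by rw [hF]; linarith)
  rcases le_or_gt (F y₀) 0 with h | h
  · refine ⟨-y₀, by simpa using hy₀.le, ?_⟩
    rw [map_neg]
    calc 1 - η < ‖F y₀‖ := hFy₀
    _ = -(F y₀) := by rw [Real.norm_eq_abs, abs_of_nonpos h]
  · refine ⟨y₀, hy₀.le, ?_⟩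
    calc 1 - η < ‖F y₀‖ := hFy₀
    _ = F y₀ := by rw [Real.norm_eq_abs, abs_of_pos h]


set_option maxHeartbeats 1000000 in
theorem stmt0 {X : Type*} [NormedAddCommGroup X] [NormedSpace ℝ X]
    (f g : X →L[ℝ] ℝ) (hf : ‖f‖ = 1) (hg : ‖g‖ = 1) (ε : ℝ) (hε0 : 0 < ε) (hε1 : ε < 1)
    (A : Set X) (hA : A = {x ∈ closedBall (0 : X) 1 | ε / 2 < f x})
    (hinf : 0 < sInf (g '' A)) :
    ‖f - g‖ < ε := by
  -- bounds for applying f, g on the ball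
  have fb : ∀ x : X, ‖x‖ ≤ 1 → -1 ≤ f x ∧ f x ≤ 1 := by
    intro x hx
    have h := f.le_opNorm x
    rw [hf, one_mul, Real.norm_eq_abs] at h
    constructor <;> [linarith [abs_le.1 (h.trans hx)]; linarith [abs_le.1 (h.trans hx)]]
  have gb : ∀ x : X, ‖x‖ ≤ 1 → -1 ≤ g x ∧ g x ≤ 1 := by
    intro x hx
    have h := g.le_opNorm x
    rw [hg, one_mul, Real.norm_eq_abs] at h
    constructor <;> [linarith [abs_le.1 (h.trans hx)]; linarith [abs_le.1 (h.trans hx)]]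
  set δ : ℝ := min (sInf (g '' A)) (ε/4) with hδdef
  have hδ0 : 0 < δ := lt_min hinf (by linarith)
  have hδε : δ ≤ ε/4 := min_le_right _ _
  have hδ1 : δ < 1 := by linarith
  -- the slice property
  have hbdd : BddBelow (g '' A) := by
    refine ⟨-1, fun v hv => ?_⟩
    obtain ⟨p, hp, rfl⟩ := hv
    rw [hA] at hp
    exact (gb p (by simpa [mem_closedBall, dist_eq_norm] using hp.1)).1
  have L1 : ∀ p : X, ‖p‖ ≤ 1 → ε/2 < f p → δ ≤ g p := by
    intro p hp hfp
    have hmem : g p ∈ g '' A := ⟨p, by rw [hA]; exact ⟨by simpa [mem_closedBall, dist_eq_norm], hfp⟩, rfl⟩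
    exact (min_le_left _ _).trans (csInf_le hbdd hmem)
  set η : ℝ := δ * (1 - ε) / 16 with hηdef
  have hη0 : 0 < η := by
    apply div_pos (mul_pos hδ0 (by linarith)) (by norm_num)
  have hη1 : η ≤ δ / 16 := by
    rw [hηdef]
    have : δ * (1 - ε) ≤ δ * 1 := by nlinarith
    linarith
  have hηε : 16 * η ≤ δ * (1 - ε) := by rw [hηdef]; ring_nf; linarith
  have hηsmall : η < 1/64 := by nlinarith
  -- key pointwise estimate
  have key : ∀ x : X, ‖x‖ ≤ 1 → f x - g x ≤ ε - δ := by
    intro x hx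
    obtain ⟨hfx1, hfx2⟩ := fb x hx
    obtain ⟨hgx1, hgx2⟩ := gb x hx
    rcases le_or_gt (f x) (ε/2) with hφ | hφ
    · -- Case 1 : f x ≤ ε/2
      obtain ⟨y, hy1, hfy⟩ := exists_near_norming f hf hη0
      obtain ⟨hgy1, hgy2⟩ := gb y hy1
      have h1φ : 0 < 1 - f x := by linarith
      have hnum : 0 < 1 - η - ε/2 := by linarith
      set t : ℝ := (1 - η - ε/2) / (1 - f x) with htdef
      have ht0 : 0 < t := div_pos hnum h1φ
      have htmul : t * (1 - f x) = 1 - η - ε/2 := div_mul_cancel₀ _ h1φ.ne'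
      have ht1 : t ≤ 1 := by
        rw [htdef, div_le_one h1φ]; linarith
      set p : X := (1-t) • y + t • x with hpdef
      have hp1 : ‖p‖ ≤ 1 := by
        calc ‖p‖ ≤ ‖(1-t) • y‖ + ‖t • x‖ := norm_add_le _ _
        _ = (1-t) * ‖y‖ + t * ‖x‖ := by
            rw [norm_smul, norm_smul, Real.norm_eq_abs, Real.norm_eq_abs,
              abs_of_nonneg (by linarith), abs_of_nonneg ht0.le]
        _ ≤ (1-t) * 1 + t * 1 := by
            apply add_le_add
            · exact mul_le_mul_of_nonneg_left hy1 (by linarith)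
            · exact mul_le_mul_of_nonneg_left hx ht0.le
        _ = 1 := by ring
      have hfpeq : f p = (1-t) * f y + t * f x := by
        simp [hpdef, map_add, map_smul, smul_eq_mul]
      have hfp : ε/2 < f p := by
        rw [hfpeq]
        have h2 : (1-t) * (1-η) ≤ (1-t) * f y :=
          mul_le_mul_of_nonneg_left hfy.le (by linarith)
        nlinarith [mul_pos ht0 hη0]
      have hgp := L1 p hp1 hfp
      have hgpeq : g p = (1-t) * g y + t * g x := by
        simp [hpdef, map_add, map_smul, smul_eq_mul]
      rw [hgpeq] at hgp
      -- derive t * g x ≥ δ - 1 + t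
      have hgy' : (1-t) * g y ≤ 1 - t := by
        nlinarith
      have htg : δ - 1 + t ≤ t * g x := by linarith
      -- t * (f x - g x) ≤ η + ε/2 - δ
      have hM : t * (f x - g x) ≤ η + ε/2 - δ := by nlinarith
      rcases le_or_gt (f x - g x) 0 with hD | hD
      · linarith
      · have hD2 : f x - g x ≤ 2 := by linarith
        have hchain : (f x - g x) * (1 - η - ε/2) ≤ (η + ε/2 - δ) * (2 - (f x - g x)) := by
          have e1 : (f x - g x) * (1 - η - ε/2) = ((f x - g x) * t) * (1 - f x) := by
            rw [mul_assoc, htmul]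
          rw [e1]
          have e2 : ((f x - g x) * t) * (1 - f x) ≤ ((f x - g x) * t) * (2 - (f x - g x)) := by
            apply mul_le_mul_of_nonneg_left (by linarith) (mul_nonneg hD.le ht0.le)
          have e3 : ((f x - g x) * t) * (2 - (f x - g x)) ≤ (η + ε/2 - δ) * (2 - (f x - g x)) := by
            apply mul_le_mul_of_nonneg_right (by linarith [hM]) (by linarith)
          linarith
        -- conclude: (f x - g x) * (1 - δ) ≤ ε - 2δ + 2η ≤ (ε - δ)(1 - δ)
        nlinarith [hchain]
    · -- Case 2 : f x > ε/2
      obtain ⟨z₀, hz₀1, hgz₀⟩ := exists_near_norming g hg hη0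
      set z : X := -z₀ with hzdef
      have hz1 : ‖z‖ ≤ 1 := by simpa [hzdef] using hz₀1
      have hgz : g z < -(1 - η) := by
        rw [hzdef, map_neg]; linarith
      obtain ⟨hfz1, hfz2⟩ := fb z hz1
      have hφ1 : 0 < f x + 1 := by linarith
      set t : ℝ := (1 - η) * (f x - ε/2) / (f x + 1) with htdef
      have ht0 : 0 < t := div_pos (mul_pos (by linarith) (by linarith)) hφ1
      have htmul : t * (f x + 1) = (1 - η) * (f x - ε/2) := div_mul_cancel₀ _ hφ1.ne'
      have ht1 : t < 1 := by
        rw [htdef, div_lt_one hφ1]; nlinarith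
      set p : X := (1-t) • x + t • z with hpdef
      have hp1 : ‖p‖ ≤ 1 := by
        calc ‖p‖ ≤ ‖(1-t) • x‖ + ‖t • z‖ := norm_add_le _ _
        _ = (1-t) * ‖x‖ + t * ‖z‖ := by
            rw [norm_smul, norm_smul, Real.norm_eq_abs, Real.norm_eq_abs,
              abs_of_nonneg (by linarith), abs_of_nonneg ht0.le]
        _ ≤ (1-t) * 1 + t * 1 := by
            apply add_le_add
            · exact mul_le_mul_of_nonneg_left hx (by linarith)
            · exact mul_le_mul_of_nonneg_left hz1 ht0.le
        _ = 1 := by ring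
      have hfpeq : f p = (1-t) * f x + t * f z := by
        simp [hpdef, map_add, map_smul, smul_eq_mul]
      have hfp : ε/2 < f p := by
        rw [hfpeq]
        have h2 : 0 ≤ t * (f z + 1) := mul_nonneg ht0.le (by linarith)
        nlinarith [mul_pos hη0 (show 0 < f x - ε/2 by linarith)]
      have hgp := L1 p hp1 hfp
      have hgpeq : g p = (1-t) * g x + t * g z := by
        simp [hpdef, map_add, map_smul, smul_eq_mul]
      rw [hgpeq] at hgp
      have hgz' : t * g z ≤ -(t * (1 - η)) :=
        le_of_le_of_eq (mul_le_mul_of_nonneg_left hgz.le ht0.le) (by ring)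
      have h1 : δ + t * (1 - η) ≤ (1-t) * g x := by nlinarith
      -- target inequality after clearing denominators
      have hs0 : (0:ℝ) ≤ f x - ε/2 := by linarith
      have hp1 : (0:ℝ) ≤ (δ - 3*η) * (f x - ε/2) :=
        mul_nonneg (by linarith) hs0
      have hp2 : (0:ℝ) ≤ η * (f x - ε/2) * (1 + η - f x + ε - δ) :=
        mul_nonneg (mul_nonneg hη0.le hs0) (by linarith)
      have hp3 : (0:ℝ) ≤ (ε/2) * (1 - f x) := mul_nonneg (by linarith) (by linarith)
      have hp4 : (0:ℝ) < ε * ε := mul_pos hε0 hε0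
      have H : (f x - ε + δ) * ((f x + 1) - (1 - η) * (f x - ε/2)) ≤
          δ * (f x + 1) + (1 - η) * ((1 - η) * (f x - ε/2)) := by
        nlinarith [hp1, hp2, hp3, hp4]
      have key2 : (δ + t * (1 - η)) - (f x - ε + δ) * (1 - t) =
          ((δ * (f x + 1) + (1 - η) * ((1 - η) * (f x - ε/2))) -
            (f x - ε + δ) * ((f x + 1) - (1 - η) * (f x - ε/2))) / (f x + 1) := by
        rw [htdef]
        field_simp
      have h3 : 0 ≤ (δ + t * (1 - η)) - (f x - ε + δ) * (1 - t) := by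
        rw [key2]
        exact div_nonneg (by linarith) hφ1.le
      have h4 : (f x - ε + δ) * (1 - t) ≤ (1 - t) * g x := by linarith
      have h5 : f x - ε + δ ≤ g x := by
        have h1t : 0 < 1 - t := by linarith
        have h4' : (1 - t) * (f x - ε + δ) ≤ (1 - t) * g x := by linear_combination h4
        exact le_of_mul_le_mul_left h4' h1t
      linarith
  -- conclude the norm bound
  have hnorm : ‖f - g‖ ≤ ε - δ := by
    apply ContinuousLinearMap.opNorm_le_bound _ (by linarith)
    intro x
    rcases eq_or_ne x 0 with rfl | hx
    · simp
    · have hx0 : 0 < ‖x‖ := norm_pos_iff.2 hx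
      set u : X := ‖x‖⁻¹ • x with hudef
      have hu : ‖u‖ ≤ 1 := by
        rw [hudef, norm_smul, Real.norm_eq_abs, abs_of_pos (inv_pos.2 hx0),
          inv_mul_cancel₀ hx0.ne']
      have h1 := key u hu
      have h2 := key (-u) (by simpa using hu)
      have habs : |f u - g u| ≤ ε - δ := by
        rw [abs_le]
        constructor
        · rw [map_neg, map_neg] at h2; linarith
        · exact h1
      have hfu : f u = ‖x‖⁻¹ * f x := by rw [hudef, map_smul, smul_eq_mul]
      have hgu : g u = ‖x‖⁻¹ * g x := by rw [hudef, map_smul, smul_eq_mul]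
      have heq : (f - g) x = ‖x‖ * (f u - g u) := by
        rw [ContinuousLinearMap.sub_apply, hfu, hgu]
        field_simp
      rw [Real.norm_eq_abs, heq, abs_mul, abs_of_pos hx0, mul_comm]
      exact mul_le_mul_of_nonneg_right habs hx0.le
  linarith
end

section
/- Let 𝒜 be a compatible collection of bounded subsets of a Banach space X and f₀ ∈ S_{X*}. If f₀ is an 𝒜-semi point of continuity of B_{X*}, then for any A ∈ 𝒜 and x₀ ∈ X with inf f₀(A) > f₀(x₀), there exist finitely many closed balls B₁,…,B_n in X such that A ⊆ closed convex hull of (B₁ ∪ … ∪ B_n) and x₀ ∉ closed convex hull of (B₁ ∪ … ∪ B_n). -/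
open Metric Set Pointwise

variable {X : Type*} [NormedAddCommGroup X] [NormedSpace ℝ X]

section Aux

variable {X : Type*} [NormedAddCommGroup X] [NormedSpace ℝ X]

lemma bddAbove_abs_image' (φ : X →L[ℝ] ℝ) {D : Set X} (h : Bornology.IsBounded D) :
    BddAbove ((fun x => |φ x|) '' D) := by
  obtain ⟨C, hC⟩ := h.subset_closedBall 0
  refine ⟨‖φ‖ * C, ?_⟩
  rintro _ ⟨x, hx, rfl⟩
  have h1 : ‖x‖ ≤ C := mem_closedBall_zero_iff.mp (hC hx)
  calc |φ x| = ‖φ x‖ := (Real.norm_eq_abs _).symm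
    _ ≤ ‖φ‖ * ‖x‖ := φ.le_opNorm x
    _ ≤ ‖φ‖ * C := by
        exact mul_le_mul_of_nonneg_left h1 (norm_nonneg φ)

lemma abs_le_dualSeminormOn' (φ : X →L[ℝ] ℝ) {D : Set X} (h : Bornology.IsBounded D)
    {d : X} (hd : d ∈ D) : |φ d| ≤ dualSeminormOn D φ :=
  le_csSup (bddAbove_abs_image' φ h) ⟨d, hd, rfl⟩

lemma weakstar_nbhd (U : Set (X →L[ℝ] ℝ)) (hU : IsWeakStarOpen U)
    (g₀ : X →L[ℝ] ℝ) (hg : g₀ ∈ U) :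
    ∃ (I : Finset X) (δ : ℝ), 0 < δ ∧
      ∀ g : X →L[ℝ] ℝ, (∀ y ∈ I, |g y - g₀ y| < δ) → g ∈ U := by
  obtain ⟨O, hO, hOU⟩ := isOpen_induced_iff.mp hU
  have hOU2 : (fun (x : X →L[ℝ] ℝ) (y : X) => topDualPairing ℝ X x y) ⁻¹' O = U := hOU
  set F : (X →L[ℝ] ℝ) → (X → ℝ) := fun g y => topDualPairing ℝ X g y with hF
  have hgO : F g₀ ∈ O := by
    have : g₀ ∈ F ⁻¹' O := by rw [hOU2]; exact hg
    exact this
  obtain ⟨I, u, hu, hsub⟩ := isOpen_pi_iff.mp hO (F g₀) hgO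
  have hex : ∀ y ∈ I, ∃ δ > 0, ball (F g₀ y) δ ⊆ u y := by
    intro y hy
    exact Metric.isOpen_iff.mp (hu y hy).1 _ (hu y hy).2
  choose! δf hδf hball using hex
  rcases I.eq_empty_or_nonempty with hI | hI
  · refine ⟨∅, 1, one_pos, fun g _ => ?_⟩
    have : F g ∈ O := hsub (by simp [hI])
    rw [← hOU2]; exact this
  · refine ⟨I, I.inf' hI δf, ?_, ?_⟩
    · exact (Finset.lt_inf'_iff hI).mpr (fun y hy => hδf y hy)
    · intro g hg'
      have : F g ∈ O := by
        apply hsub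
        intro y hy
        apply hball y hy
        rw [mem_ball, Real.dist_eq]
        calc |F g y - F g₀ y| = |g y - g₀ y| := rfl
          _ < I.inf' hI δf := hg' y hy
          _ ≤ δf y := Finset.inf'_le _ hy
      rw [← hOU2]; exact this

end Aux


set_option maxHeartbeats 1000000 in
theorem stmt2 {X : Type*} [NormedAddCommGroup X] [NormedSpace ℝ X] [CompleteSpace X]
    (𝒜 : Set (Set X)) (h𝒜 : IsCompatible 𝒜)
    (f₀ : X →L[ℝ] ℝ) (hf₀ : ‖f₀‖ = 1) (hpc : IsASemiPC 𝒜 f₀) :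
    ∀ A ∈ 𝒜, ∀ x₀ : X, f₀ x₀ < sInf (f₀ '' A) →
      ∃ (n : ℕ) (c : Fin n → X) (r : Fin n → ℝ),
        A ⊆ closure (convexHull ℝ (⋃ i, closedBall (c i) (r i))) ∧
        x₀ ∉ closure (convexHull ℝ (⋃ i, closedBall (c i) (r i))) := by
  intro A hA x₀ hx
  rcases A.eq_empty_or_nonempty with hAe | hAne
  · subst hAe
    exact ⟨0, Fin.elim0, Fin.elim0, by simp, by simp⟩
  obtain ⟨a₀, ha₀⟩ := hAne
  obtain ⟨γ, hγdef⟩ : ∃ t : ℝ, t = sInf (f₀ '' A) - f₀ x₀ := ⟨_, rfl⟩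
  have hγ : 0 < γ := by rw [hγdef]; exact sub_pos.mpr hx
  obtain ⟨A', hA'def⟩ : ∃ B : Set X, B = (fun a => a + (-x₀)) '' A := ⟨_, rfl⟩
  have hA'mem : A' ∈ 𝒜 := by rw [hA'def]; exact h𝒜.translate_mem A hA (-x₀)
  obtain ⟨D, hDdef⟩ : ∃ B : Set X, B = closure (absConvexHull ℝ A') := ⟨_, rfl⟩
  have hDmem : D ∈ 𝒜 := by rw [hDdef]; exact h𝒜.closure_absConvexHull_mem A' hA'mem
  have hDbdd := h𝒜.bounded D hDmem
  have hA'D : A' ⊆ D := by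
    rw [hDdef]; exact fun z hz => subset_closure (subset_absConvexHull hz)
  have hDbal : Balanced ℝ D := by rw [hDdef]; exact balanced_absConvexHull.closure
  obtain ⟨K, hK⟩ := hDbdd.subset_closedBall 0
  have hKD : ∀ d ∈ D, ‖d‖ ≤ K := fun d hd => mem_closedBall_zero_iff.mp (hK hd)
  have hA'A : ∀ a ∈ A, a + -x₀ ∈ D := by
    intro a ha
    apply hA'D
    rw [hA'def]
    exact ⟨a, ha, rfl⟩
  have hK0 : 0 ≤ K := le_trans (norm_nonneg _) (hKD _ (hA'A a₀ ha₀))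
  have hf₀a' : ∀ a : X, f₀ (a + -x₀) = f₀ a - f₀ x₀ := by
    intro a; rw [map_add, map_neg]; ring
  have habsK : ∀ a ∈ A, |f₀ (a + -x₀)| ≤ K := by
    intro a ha
    calc |f₀ (a + -x₀)| = ‖f₀ (a + -x₀)‖ := (Real.norm_eq_abs _).symm
      _ ≤ ‖f₀‖ * ‖a + -x₀‖ := f₀.le_opNorm _
      _ ≤ 1 * K := by
          apply mul_le_mul (le_of_eq hf₀) (hKD _ (hA'A a ha)) (norm_nonneg _) zero_le_one
      _ = K := one_mul K
  have hbddb : BddBelow (f₀ '' A) := by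
    refine ⟨f₀ x₀ - K, ?_⟩
    rintro _ ⟨a, ha, rfl⟩
    have h1 := (abs_le.mp (habsK a ha)).1
    have h2 := hf₀a' a
    linarith
  have hγA' : ∀ a ∈ A, γ ≤ f₀ (a + -x₀) := by
    intro a ha
    have h1 := csInf_le hbddb (mem_image_of_mem f₀ ha)
    rw [hf₀a', hγdef]
    linarith
  -- the seminorm value p
  obtain ⟨p, hpdef⟩ : ∃ t : ℝ, t = dualSeminormOn D f₀ := ⟨_, rfl⟩
  have hpγ : γ ≤ p := by
    rw [hpdef]
    exact le_trans (le_trans (hγA' a₀ ha₀) (le_abs_self _))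
      (abs_le_dualSeminormOn' f₀ hDbdd (hA'A a₀ ha₀))
  -- an almost norming point d for f₀ in D
  have himg : ((fun x => |f₀ x|) '' D).Nonempty := ⟨_, ⟨_, hA'A a₀ ha₀, rfl⟩⟩
  have hlt : p - γ/4 < sSup ((fun x => |f₀ x|) '' D) := by
    have he : sSup ((fun x => |f₀ x|) '' D) = p := hpdef.symm
    rw [he]; linarith
  obtain ⟨_, ⟨d₀, hd₀D, rfl⟩, hd₀⟩ := exists_lt_of_lt_csSup himg hlt
  have hd₀' : p - γ/4 < |f₀ d₀| := hd₀
  obtain ⟨d, hddef⟩ : ∃ z : X, z = if 0 ≤ f₀ d₀ then d₀ else -d₀ := ⟨_, rfl⟩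
  have hdD : d ∈ D := by
    rw [hddef]; split
    · exact hd₀D
    · exact hDbal.neg_mem_iff.mpr hd₀D
  have hfd : p - γ/4 < f₀ d := by
    rw [hddef]; split_ifs with h
    · rwa [abs_of_nonneg h] at hd₀'
    · rw [map_neg]; rw [abs_of_neg (not_le.mp h)] at hd₀'; linarith
  have hfdp : f₀ d ≤ p := by
    rw [hpdef]
    exact le_trans (le_abs_self _) (abs_le_dualSeminormOn' f₀ hDbdd hdD)
  -- apply the semi-PC hypothesis
  obtain ⟨U, hUo, ⟨g₀, hg₀U, hg₀1⟩, hUsub⟩ := hpc D hDmem (γ/2) (by linarith)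
  have hg₀n : ‖g₀‖ ≤ 1 := mem_closedBall_zero_iff.mp hg₀1
  obtain ⟨l₀, hl₀, h₀, hh₀, hg₀eq⟩ := hUsub ⟨hg₀U, hg₀1⟩
  have hsemi : ∀ h : X →L[ℝ] ℝ, dualSeminormOn D (h - f₀) < γ/2 →
      ∀ z ∈ D, |h z - f₀ z| < γ/2 := by
    intro h hh z hz
    have h1 : |(h - f₀) z| ≤ dualSeminormOn D (h - f₀) :=
      abs_le_dualSeminormOn' _ hDbdd hz
    rw [ContinuousLinearMap.sub_apply] at h1
    linarith
  have hh₀D : ∀ z ∈ D, |h₀ z - f₀ z| < γ/2 := hsemi h₀ hh₀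
  have hg₀app : ∀ z, g₀ z = l₀ * h₀ z := by
    intro z; rw [hg₀eq]; simp [smul_eq_mul]
  have hqpos : l₀ * (γ/4) ≤ g₀ d := by
    have h1 := abs_lt.mp (hh₀D d hdD)
    have h2 : γ/4 ≤ h₀ d := by linarith
    rw [hg₀app]
    exact mul_le_mul_of_nonneg_left h2 hl₀.le
  have hq0 : 0 < g₀ d := lt_of_lt_of_le (by positivity) hqpos
  obtain ⟨b, hbdef⟩ : ∃ t : ℝ, t = ‖g₀‖ := ⟨_, rfl⟩
  have hbpos : 0 < b := by
    rw [hbdef, norm_pos_iff]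
    intro h
    rw [h] at hq0
    simp at hq0
  have hble : b ≤ 1 := by rw [hbdef]; exact hg₀n
  have hbinv : 1 ≤ b⁻¹ := by
    have h1 : b⁻¹ * b ≤ b⁻¹ * 1 :=
      mul_le_mul_of_nonneg_left hble (inv_nonneg.mpr hbpos.le)
    rw [inv_mul_cancel₀ hbpos.ne'] at h1
    linarith
  obtain ⟨w, hwdef⟩ : ∃ z : X, z = (g₀ d)⁻¹ • d := ⟨_, rfl⟩
  have hgw : g₀ w = 1 := by
    rw [hwdef, map_smul, smul_eq_mul]
    field_simp
  -- extract a basic weak* neighborhood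
  obtain ⟨I, δ, hδ, hVU⟩ := weakstar_nbhd U hUo g₀ hg₀U
  obtain ⟨T, hTdef⟩ : ∃ t : ℝ, t = ∑ y ∈ I, |g₀ y| := ⟨_, rfl⟩
  have hTle : ∀ y ∈ I, |g₀ y| ≤ T := by
    intro y hy
    rw [hTdef]
    exact Finset.single_le_sum (f := fun z => |g₀ z|) (fun i _ => abs_nonneg _) hy
  have hT0 : 0 ≤ T := by
    rw [hTdef]; exact Finset.sum_nonneg fun i _ => abs_nonneg _
  obtain ⟨δy, hδydef⟩ : ∃ t : ℝ, t = δ/2 := ⟨_, rfl⟩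
  have hδy0 : 0 < δy := by rw [hδydef]; linarith
  obtain ⟨δw, hδwdef⟩ : ∃ t : ℝ, t = min (δ/(2*(T+1))) 2⁻¹ := ⟨_, rfl⟩
  have hδw0 : 0 < δw := by
    rw [hδwdef]; exact lt_min (by positivity) (by norm_num)
  have hδw2 : δw ≤ 2⁻¹ := by rw [hδwdef]; exact min_le_right _ _
  have hδwT : T * δw ≤ δ/2 := by
    have h1 : T * δw ≤ T * (δ/(2*(T+1))) := by
      apply mul_le_mul_of_nonneg_left _ hT0
      rw [hδwdef]; exact min_le_left _ _
    have h2 : T * (δ/(2*(T+1))) ≤ δ/2 := by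
      rw [mul_div_assoc', div_le_div_iff₀ (by positivity) (by norm_num)]
      have h3 : 0 ≤ T * δ := mul_nonneg hT0 hδ.le
      ring_nf
      nlinarith [hδ.le, hT0]
    linarith
  obtain ⟨y', hy'def⟩ : ∃ F : X → X, F = fun y => y - (g₀ y) • w := ⟨_, rfl⟩
  have hy'app : ∀ y, y' y = y - (g₀ y) • w := fun y => by rw [hy'def]
  have hg₀y' : ∀ y, g₀ (y' y) = 0 := by
    intro y
    rw [hy'app, map_sub, map_smul, hgw, smul_eq_mul, mul_one, sub_self]
  have hVmem : ∀ g : X →L[ℝ] ℝ, (∀ y ∈ I, |g (y' y)| < δy) → |g w - 1| < δw → g ∈ U := by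
    intro g h1 h2
    apply hVU
    intro y hy
    have he : g y - g₀ y = g (y' y) + g₀ y * (g w - 1) := by
      rw [hy'app, map_sub, map_smul, smul_eq_mul]
      ring
    rw [he]
    calc |g (y' y) + g₀ y * (g w - 1)| ≤ |g (y' y)| + |g₀ y| * |g w - 1| := by
          rw [← abs_mul]; exact abs_add_le _ _
      _ < δy + T * δw := by
          apply add_lt_add_of_lt_of_le (h1 y hy)
          exact mul_le_mul (hTle y hy) h2.le (abs_nonneg _) hT0
      _ ≤ δ := by rw [hδydef]; linarith
  -- the "good direction" lemma
  have hGood : ∀ g : X →L[ℝ] ℝ, g ≠ 0 →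
      (∀ y ∈ I, |g (y' y)| < δy * ‖g‖) → g w < (δw - 1) * ‖g‖ →
      ∃ μ : ℝ, 0 < μ ∧ ∃ h : X →L[ℝ] ℝ,
        dualSeminormOn D (h - f₀) < γ/2 ∧ (-g : X →L[ℝ] ℝ) = μ • h := by
    intro g hg0 hy hw
    have hng : 0 < ‖g‖ := norm_pos_iff.mpr hg0
    have hm0 : (1 - δw) * ‖g‖ < -(g w) := by linarith [hw]
    have hm : 0 < -(g w) := by
      have h1 : 0 < (1 - δw) * ‖g‖ := by
        apply mul_pos _ hng
        linarith
      linarith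
    obtain ⟨m, hmdef⟩ : ∃ t : ℝ, t = -(g w) := ⟨_, rfl⟩
    rw [← hmdef] at hm0 hm
    obtain ⟨lam, hlamdef⟩ : ∃ t : ℝ, t = if ‖g‖ ≤ m then m⁻¹ else ‖g‖⁻¹ := ⟨_, rfl⟩
    have hlam0 : 0 < lam := by rw [hlamdef]; split <;> positivity
    have hlamng : lam * ‖g‖ ≤ 1 := by
      rw [hlamdef]; split_ifs with h
      · have h1 : m⁻¹ * ‖g‖ ≤ m⁻¹ * m :=
          mul_le_mul_of_nonneg_left h (inv_nonneg.mpr hm.le)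
        rwa [inv_mul_cancel₀ hm.ne'] at h1
      · rw [inv_mul_cancel₀ hng.ne']
    have hmemV : -(lam • g) ∈ U := by
      apply hVmem
      · intro y hyI
        have e1 : |(-(lam • g)) (y' y)| = lam * |g (y' y)| := by
          rw [ContinuousLinearMap.neg_apply, abs_neg, ContinuousLinearMap.smul_apply,
            smul_eq_mul, abs_mul, abs_of_pos hlam0]
        rw [e1]
        calc lam * |g (y' y)| < lam * (δy * ‖g‖) :=
              mul_lt_mul_of_pos_left (hy y hyI) hlam0
          _ = δy * (lam * ‖g‖) := by ring
          _ ≤ δy * 1 := mul_le_mul_of_nonneg_left hlamng hδy0.le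
          _ = δy := mul_one _
      · have hval : (-(lam • g)) w = lam * m := by
          rw [ContinuousLinearMap.neg_apply, ContinuousLinearMap.smul_apply,
            smul_eq_mul, hmdef]
          ring
        rw [hval, hlamdef]
        split_ifs with h
        · rw [inv_mul_cancel₀ hm.ne']
          simpa using hδw0
        · have hmlt : m < ‖g‖ := not_le.mp h
          have h1 : ‖g‖⁻¹ * m < ‖g‖⁻¹ * ‖g‖ :=
            mul_lt_mul_of_pos_left hmlt (inv_pos.mpr hng)
          rw [inv_mul_cancel₀ hng.ne'] at h1
          have h2 : ‖g‖⁻¹ * ((1 - δw) * ‖g‖) < ‖g‖⁻¹ * m :=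
            mul_lt_mul_of_pos_left hm0 (inv_pos.mpr hng)
          have h3 : ‖g‖⁻¹ * ((1 - δw) * ‖g‖) = 1 - δw := by
            field_simp
          rw [h3] at h2
          rw [abs_lt]
          constructor <;> linarith
    have hballm : -(lam • g) ∈ closedBall (0 : X →L[ℝ] ℝ) 1 := by
      rw [mem_closedBall_zero_iff]
      calc ‖-(lam • g)‖ = ‖lam • g‖ := norm_neg _
        _ = ‖lam‖ * ‖g‖ := norm_smul lam g
        _ = lam * ‖g‖ := by rw [Real.norm_eq_abs, abs_of_pos hlam0]
        _ ≤ 1 := hlamng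
    obtain ⟨l, hl, h, hh, heq⟩ := hUsub ⟨hmemV, hballm⟩
    refine ⟨lam⁻¹ * l, by positivity, h, hh, ?_⟩
    have e2 : lam⁻¹ • (-(lam • g)) = -g := by
      rw [smul_neg, smul_smul, inv_mul_cancel₀ hlam0.ne', one_smul]
    rw [← e2, heq, smul_smul]
  -- constants
  obtain ⟨NA, hNAdef⟩ : ∃ t : ℝ, t = (K + ‖w‖ + 1)/δy := ⟨_, rfl⟩
  obtain ⟨NB, hNBdef⟩ : ∃ t : ℝ, t = (K + b⁻¹ + 1)/δw := ⟨_, rfl⟩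
  obtain ⟨R, hRdef⟩ : ∃ t : ℝ, t = (2*b)⁻¹ := ⟨_, rfl⟩
  obtain ⟨rB, hrBdef⟩ : ∃ t : ℝ, t = (NB - 1)/b := ⟨_, rfl⟩
  obtain ⟨ρ, hρdef⟩ : ∃ t : ℝ, t = (γ/2)/(p + γ/2) := ⟨_, rfl⟩
  have hp2 : 0 < p + γ/2 := by linarith
  have hρ0 : 0 < ρ := by rw [hρdef]; positivity
  have hρp : ρ * (p + γ/2) = γ/2 := by
    rw [hρdef]; exact div_mul_cancel₀ _ hp2.ne'
  have hNA0 : 0 ≤ NA := by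
    rw [hNAdef]
    apply div_nonneg _ hδy0.le
    have := norm_nonneg w; linarith
  have hNAδ : NA * δy = K + ‖w‖ + 1 := by
    rw [hNAdef]; exact div_mul_cancel₀ _ hδy0.ne'
  have hNB1 : 1 ≤ NB := by
    rw [hNBdef, le_div_iff₀ hδw0]
    linarith
  have hNBδ : NB * δw = K + b⁻¹ + 1 := by
    rw [hNBdef]; exact div_mul_cancel₀ _ hδw0.ne'
  have hR0 : 0 ≤ R := by rw [hRdef]; positivity
  have hrB0 : 0 ≤ rB := by
    rw [hrBdef]; apply div_nonneg _ hbpos.le; linarith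
  have hrBb : rB * b = NB - 1 := by
    rw [hrBdef]; exact div_mul_cancel₀ _ hbpos.ne'
  have hRb : R * b = 2⁻¹ := by
    rw [hRdef]
    field_simp
  -- the list of balls
  obtain ⟨L, hLdef⟩ : ∃ L : List (X × ℝ), L = (x₀ + ρ • d, (0:ℝ)) :: (x₀ + NB • w, rB) ::
      I.toList.flatMap (fun y => [(x₀ + w + NA • y' y, R), (x₀ + w - NA • y' y, R)]) :=
    ⟨_, rfl⟩
  have hmemL : ∀ pr : X × ℝ, pr ∈ L ↔ pr = (x₀ + ρ • d, 0) ∨ pr = (x₀ + NB • w, rB) ∨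
      ∃ y ∈ I, pr = (x₀ + w + NA • y' y, R) ∨ pr = (x₀ + w - NA • y' y, R) := by
    intro pr
    rw [hLdef]
    simp [List.mem_flatMap, Finset.mem_toList]
  have hrad : ∀ pr ∈ L, 0 ≤ pr.2 := by
    intro pr hpr
    rcases (hmemL pr).mp hpr with h | h | ⟨y, hyI, h | h⟩ <;> rw [h]
    · exact hrB0
    · exact hR0
    · exact hR0
  obtain ⟨κ, hκdef⟩ : ∃ t : ℝ, t = min (ρ * (l₀ * (γ/4))) 2⁻¹ := ⟨_, rfl⟩
  have hκ0 : 0 < κ := by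
    rw [hκdef]; exact lt_min (by positivity) (by norm_num)
  have hκ2 : κ ≤ 2⁻¹ := by rw [hκdef]; exact min_le_right _ _
  have hκρ : κ ≤ ρ * (l₀ * (γ/4)) := by rw [hκdef]; exact min_le_left _ _
  have hmargin : ∀ pr ∈ L, g₀ x₀ + pr.2 * b + κ ≤ g₀ pr.1 := by
    intro pr hpr
    rcases (hmemL pr).mp hpr with h | h | ⟨y, hyI, h | h⟩ <;> rw [h] <;> dsimp only
    · have e1 : g₀ (x₀ + ρ • d) = g₀ x₀ + ρ * g₀ d := by
        rw [map_add, map_smul, smul_eq_mul]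
      rw [e1]
      have h2 : ρ * (l₀ * (γ/4)) ≤ ρ * g₀ d := mul_le_mul_of_nonneg_left hqpos hρ0.le
      linarith
    · have e1 : g₀ (x₀ + NB • w) = g₀ x₀ + NB := by
        rw [map_add, map_smul, smul_eq_mul, hgw, mul_one]
      rw [e1, hrBb]
      linarith
    · have e1 : g₀ (x₀ + w + NA • y' y) = g₀ x₀ + 1 := by
        rw [map_add, map_add, map_smul, hgw, hg₀y', smul_zero, add_zero]
      rw [e1, hRb]
      linarith
    · have e1 : g₀ (x₀ + w - NA • y' y) = g₀ x₀ + 1 := by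
        rw [map_sub, map_add, map_smul, hgw, hg₀y', smul_zero, sub_zero]
      rw [e1, hRb]
      linarith
  -- covering estimate
  have hcover : ∀ a ∈ A, ∀ f : X →L[ℝ] ℝ, f ≠ 0 →
      ∃ pr ∈ L, f a ≤ f pr.1 + pr.2 * ‖f‖ := by
    intro a ha f hf0
    have hfa : f a = f x₀ + f (a + -x₀) := by
      rw [← map_add]; congr 1; abel
    have hfnorm : f (a + -x₀) ≤ K * ‖f‖ := by
      calc f (a + -x₀) ≤ |f (a + -x₀)| := le_abs_self _
        _ = ‖f (a + -x₀)‖ := (Real.norm_eq_abs _).symm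
        _ ≤ ‖f‖ * ‖a + -x₀‖ := f.le_opNorm _
        _ ≤ ‖f‖ * K := mul_le_mul_of_nonneg_left (hKD _ (hA'A a ha)) (norm_nonneg f)
        _ = K * ‖f‖ := mul_comm _ _
    by_cases hcone : ∃ μ : ℝ, 0 < μ ∧ ∃ h : X →L[ℝ] ℝ,
        dualSeminormOn D (h - f₀) < γ/2 ∧ (-f : X →L[ℝ] ℝ) = μ • h
    · obtain ⟨μ, hμ, h, hh, heq⟩ := hcone
      have hfz : ∀ z, f z = -(μ * h z) := by
        intro z
        have := DFunLike.congr_fun heq z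
        simp only [ContinuousLinearMap.neg_apply, ContinuousLinearMap.smul_apply,
          smul_eq_mul] at this
        linarith
      refine ⟨(x₀ + ρ • d, 0), (hmemL _).mpr (Or.inl rfl), ?_⟩
      dsimp only
      have ha'D := hA'A a ha
      have hha' := abs_lt.mp (hsemi h hh _ ha'D)
      have hhd := abs_lt.mp (hsemi h hh d hdD)
      have hγa := hγA' a ha
      have e1 : f (a + -x₀) ≤ -(μ * (γ/2)) := by
        have h1 : γ/2 ≤ h (a + -x₀) := by linarith
        have h2 : μ * (γ/2) ≤ μ * h (a + -x₀) := mul_le_mul_of_nonneg_left h1 hμ.le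
        rw [hfz]
        linarith
      have e2 : -(μ * (γ/2)) ≤ ρ * f d := by
        have h3 : h d ≤ p + γ/2 := by linarith
        have h5 : ρ * h d ≤ ρ * (p + γ/2) := mul_le_mul_of_nonneg_left h3 hρ0.le
        have h6 : μ * (ρ * h d) ≤ μ * (ρ * (p + γ/2)) := mul_le_mul_of_nonneg_left h5 hμ.le
        rw [hρp] at h6
        have h4 : f d = -(μ * h d) := hfz d
        rw [h4]
        linarith [h6]
      have e3 : f (x₀ + ρ • d) = f x₀ + ρ * f d := by
        rw [map_add, map_smul, smul_eq_mul]
      rw [hfa, e3, zero_mul, add_zero]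
      linarith
    · push_neg at hcone
      have hdich : (∃ y ∈ I, δy * ‖f‖ ≤ |f (y' y)|) ∨ (δw - 1) * ‖f‖ ≤ f w := by
        by_contra hc
        push_neg at hc
        obtain ⟨h1, h2⟩ := hc
        obtain ⟨μ, hμ, h, hh, heq⟩ := hGood f hf0 (fun y hy => h1 y hy) h2
        exact hcone μ hμ h hh heq
      rcases hdich with ⟨y, hyI, hy⟩ | hB
      · -- case A : some y' y sees f
        have hfw : -(‖w‖ * ‖f‖) ≤ f w := by
          have h1 : |f w| ≤ ‖f‖ * ‖w‖ := by
            rw [← Real.norm_eq_abs]; exact f.le_opNorm w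
          have h2 := (abs_le.mp h1).1
          linarith [h2]
        rcases le_or_gt 0 (f (y' y)) with hs | hs
        · refine ⟨(x₀ + w + NA • y' y, R),
            (hmemL _).mpr (Or.inr (Or.inr ⟨y, hyI, Or.inl rfl⟩)), ?_⟩
          dsimp only
          have e1 : f (x₀ + w + NA • y' y) = f x₀ + f w + NA * f (y' y) := by
            rw [map_add, map_add, map_smul, smul_eq_mul]
          rw [hfa, e1]
          have h5 : NA * (δy * ‖f‖) ≤ NA * f (y' y) := by
            apply mul_le_mul_of_nonneg_left _ hNA0
            rwa [abs_of_nonneg hs] at hy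
          have h6 : NA * (δy * ‖f‖) = (K + ‖w‖ + 1) * ‖f‖ := by
            rw [← mul_assoc, hNAδ]
          have h7 : 0 ≤ R * ‖f‖ := mul_nonneg hR0 (norm_nonneg f)
          have h8 := norm_nonneg f
          rw [h6] at h5
          linarith
        · refine ⟨(x₀ + w - NA • y' y, R),
            (hmemL _).mpr (Or.inr (Or.inr ⟨y, hyI, Or.inr rfl⟩)), ?_⟩
          dsimp only
          have e1 : f (x₀ + w - NA • y' y) = f x₀ + f w - NA * f (y' y) := by
            rw [map_sub, map_add, map_smul, smul_eq_mul]
          rw [hfa, e1]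
          have h5 : NA * (δy * ‖f‖) ≤ NA * (-(f (y' y))) := by
            apply mul_le_mul_of_nonneg_left _ hNA0
            rwa [abs_of_neg hs] at hy
          have h6 : NA * (δy * ‖f‖) = (K + ‖w‖ + 1) * ‖f‖ := by
            rw [← mul_assoc, hNAδ]
          have h7 : 0 ≤ R * ‖f‖ := mul_nonneg hR0 (norm_nonneg f)
          have h8 := norm_nonneg f
          rw [h6] at h5
          linarith
      · -- case B
        refine ⟨(x₀ + NB • w, rB), (hmemL _).mpr (Or.inr (Or.inl rfl)), ?_⟩
        dsimp only
        have e1 : f (x₀ + NB • w) = f x₀ + NB * f w := by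
          rw [map_add, map_smul, smul_eq_mul]
        rw [hfa, e1]
        have hNB0 : (0:ℝ) ≤ NB := by linarith
        have h5 : NB * ((δw - 1) * ‖f‖) ≤ NB * f w := mul_le_mul_of_nonneg_left hB hNB0
        have h5' : NB * δw * ‖f‖ - NB * ‖f‖ ≤ NB * f w := by
          have : NB * ((δw - 1) * ‖f‖) = NB * δw * ‖f‖ - NB * ‖f‖ := by ring
          linarith [h5, this.le, this.ge]
        have h6 : NB * b ≤ NB := by
          have := mul_le_mul_of_nonneg_left hble hNB0
          linarith [this]
        have h6' : NB * ‖f‖ ≤ (NB / b) * ‖f‖ := by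
          apply mul_le_mul_of_nonneg_right _ (norm_nonneg f)
          rw [le_div_iff₀ hbpos]
          exact h6
        have h7' : rB * ‖f‖ = (NB / b) * ‖f‖ - b⁻¹ * ‖f‖ := by
          rw [hrBdef]
          ring
        have h8' : NB * δw * ‖f‖ = K * ‖f‖ + b⁻¹ * ‖f‖ + ‖f‖ := by
          rw [hNBδ]; ring
        have h9 := norm_nonneg f
        linarith
  -- assemble
  obtain ⟨S, hSdef⟩ : ∃ S : Set X, S = ⋃ pr ∈ L, closedBall (Prod.fst pr) (Prod.snd pr) :=
    ⟨_, rfl⟩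
  obtain ⟨M, hMdef⟩ : ∃ M : Set X, M = closure (convexHull ℝ S) := ⟨_, rfl⟩
  have hMconv : Convex ℝ M := by rw [hMdef]; exact (convex_convexHull ℝ S).closure
  have hMclosed : IsClosed M := by rw [hMdef]; exact isClosed_closure
  have hcM : ∀ pr ∈ L, ∀ z ∈ closedBall pr.1 pr.2, z ∈ M := by
    intro pr hpr z hz
    rw [hMdef]
    apply subset_closure
    apply subset_convexHull
    rw [hSdef]
    exact mem_biUnion hpr hz
  have hc1M : (x₀ + ρ • d) ∈ M := by
    apply hcM (x₀ + ρ • d, 0) ((hmemL _).mpr (Or.inl rfl))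
    exact mem_closedBall_self le_rfl
  have hxM : x₀ ∉ M := by
    intro hxm
    have hsub2 : M ⊆ {z | g₀ x₀ + κ ≤ g₀ z} := by
      rw [hMdef]
      apply closure_minimal
      apply convexHull_min
      · intro z hz
        rw [hSdef] at hz
        simp only [mem_iUnion] at hz
        obtain ⟨pr, hpr, hz⟩ := hz
        have h1 := hmargin pr hpr
        have h2 : |g₀ z - g₀ pr.1| ≤ b * pr.2 := by
          calc |g₀ z - g₀ pr.1| = |g₀ (z - pr.1)| := by rw [map_sub]
            _ = ‖g₀ (z - pr.1)‖ := (Real.norm_eq_abs _).symm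
            _ ≤ ‖g₀‖ * ‖z - pr.1‖ := g₀.le_opNorm _
            _ ≤ b * pr.2 := by
                rw [← hbdef]
                apply mul_le_mul_of_nonneg_left _ hbpos.le
                rw [← dist_eq_norm]
                exact mem_closedBall.mp hz
        have h3 := (abs_le.mp h2).1
        simp only [mem_setOf_eq]
        linarith
      · exact convex_halfSpace_ge ⟨g₀.map_add, g₀.map_smul⟩ _
      · exact isClosed_le continuous_const g₀.continuous
    have h4 := hsub2 hxm
    simp only [mem_setOf_eq] at h4
    linarith
  have hAM : ∀ a ∈ A, a ∈ M := by
    intro a ha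
    by_contra hnot
    obtain ⟨f, u, hfM, hfau⟩ := geometric_hahn_banach_closed_point hMconv hMclosed hnot
    have hf0 : f ≠ 0 := by
      intro h
      subst h
      have h1 := hfM _ hc1M
      simp only [ContinuousLinearMap.zero_apply] at h1 hfau
      linarith
    obtain ⟨pr, hpr, hval⟩ := hcover a ha f hf0
    have hcu : f pr.1 < u := hfM _ (hcM pr hpr _ (mem_closedBall_self (hrad pr hpr)))
    have hup : f pr.1 + pr.2 * ‖f‖ ≤ u := by
      rcases eq_or_lt_of_le (hrad pr hpr) with h0 | h0
      · rw [← h0, zero_mul, add_zero]; exact hcu.le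
      · have hC : ‖f‖ ≤ (u - f pr.1)/pr.2 := by
          apply ContinuousLinearMap.opNorm_le_bound _
            (div_nonneg (by linarith) h0.le)
          intro z
          by_cases hz : z = 0
          · simp [hz]
          · have hzn : 0 < ‖z‖ := norm_pos_iff.mpr hz
            obtain ⟨ζ, hζdef⟩ : ∃ v : X, v = (pr.2/‖z‖) • z := ⟨_, rfl⟩
            have hζ : ‖ζ‖ = pr.2 := by
              rw [hζdef, norm_smul, Real.norm_eq_abs, abs_of_pos (div_pos h0 hzn)]
              field_simp
            have hmem1 : pr.1 + ζ ∈ closedBall pr.1 pr.2 := by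
              rw [mem_closedBall, dist_eq_norm, add_sub_cancel_left, hζ]
            have hmem2 : pr.1 - ζ ∈ closedBall pr.1 pr.2 := by
              rw [mem_closedBall, dist_eq_norm, sub_sub_cancel_left, norm_neg, hζ]
            have e1 : f pr.1 + f ζ < u := by
              have := hfM _ (hcM pr hpr _ hmem1); rwa [map_add] at this
            have e2 : f pr.1 - f ζ < u := by
              have := hfM _ (hcM pr hpr _ hmem2); rwa [map_sub] at this
            have e3 : |f ζ| ≤ u - f pr.1 := abs_le.mpr ⟨by linarith, by linarith⟩
            have e4 : |f ζ| = (pr.2/‖z‖) * |f z| := by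
              rw [hζdef, map_smul, smul_eq_mul, abs_mul, abs_of_pos (div_pos h0 hzn)]
            rw [e4] at e3
            rw [Real.norm_eq_abs]
            rw [div_mul_eq_mul_div, div_le_iff₀ hzn] at e3
            rw [div_mul_eq_mul_div, le_div_iff₀ h0]
            linarith
        have h10 := mul_le_mul_of_nonneg_left hC h0.le
        have h11 : pr.2 * ((u - f pr.1)/pr.2) = u - f pr.1 := by
          field_simp
        linarith [h10, h11.le, h11.ge]
    linarith
  -- final packaging
  have hSU : (⋃ i, closedBall ((L.get i).1) ((L.get i).2)) = S := by
    rw [hSdef]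
    ext z
    simp only [mem_iUnion]
    constructor
    · rintro ⟨i, hi⟩
      exact ⟨L.get i, List.get_mem L i, hi⟩
    · rintro ⟨pr, hpr, hz⟩
      obtain ⟨i, rfl⟩ := List.mem_iff_get.mp hpr
      exact ⟨i, hz⟩
  refine ⟨L.length, fun i => (L.get i).1, fun i => (L.get i).2, ?_, ?_⟩
  · rw [hSU, ← hMdef]
    intro a ha
    exact hAM a ha
  · rw [hSU, ← hMdef]
    exact hxM
end

section
/- Let 𝒜 be a compatible collection of bounded subsets of a Banach space X and f₀ ∈ S_{X*}. Suppose that for any A ∈ 𝒜 and x₀ ∈ X with inf f₀(A) > f₀(x₀), there exist finitely many closed balls B₁,…,B_n in X such that A ⊆ closed convex hull of (B₁ ∪ … ∪ B_n) and x₀ ∉ closed convex hull of (B₁ ∪ … ∪ B_n). Then f₀ is an 𝒜-semi point of continuity of B_{X*}. -/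
open Metric Set Pointwise

variable {X : Type*} [NormedAddCommGroup X] [NormedSpace ℝ X]

private lemma ball_norming_aux {X : Type*} [NormedAddCommGroup X] [NormedSpace ℝ X]
    (f : X →L[ℝ] ℝ) {c : X} {r u : ℝ} (hr : 0 ≤ r)
    (h : ∀ x ∈ Metric.closedBall c r, u ≤ f x) : u + r * ‖f‖ ≤ f c := by
  have hc : u ≤ f c := h c (Metric.mem_closedBall_self hr)
  rcases hr.eq_or_lt with h0 | hrpos
  · rw [← h0]; simpa using hc
  · have hb : ‖f‖ ≤ (f c - u) / r := by
      apply f.opNorm_le_bound (div_nonneg (by linarith) hr)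
      intro x
      rcases eq_or_ne x 0 with rfl | hx
      · simp
      · have hxn : (0:ℝ) < ‖x‖ := norm_pos_iff.2 hx
        have hmem : ∀ σ : ℝ, |σ| = 1 → c - (σ * (r / ‖x‖)) • x ∈ Metric.closedBall c r := by
          intro σ hσ
          simp only [Metric.mem_closedBall, dist_eq_norm, sub_sub_cancel_left, norm_neg,
            norm_smul, Real.norm_eq_abs, abs_mul, hσ, one_mul, abs_div, abs_of_pos hrpos,
            abs_of_pos hxn]
          rw [div_mul_cancel₀ _ hxn.ne']
        have key : ∀ σ : ℝ, |σ| = 1 → σ * f x * r ≤ (f c - u) * ‖x‖ := by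
          intro σ hσ
          have h1 := h _ (hmem σ hσ)
          rw [map_sub, map_smul] at h1
          have h2 : (σ * (r / ‖x‖)) * f x ≤ f c - u := by
            simp only [smul_eq_mul] at h1
            linarith
          calc σ * f x * r = ((σ * (r / ‖x‖)) * f x) * ‖x‖ := by
                field_simp
            _ ≤ (f c - u) * ‖x‖ := by
                exact mul_le_mul_of_nonneg_right h2 hxn.le
        have k1 := key 1 (by norm_num)
        have k2 := key (-1) (by norm_num)
        have habs : |f x| * r ≤ (f c - u) * ‖x‖ := by
          rcases abs_cases (f x) with ⟨he, _⟩ | ⟨he, _⟩ <;> rw [he] <;> nlinarith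
        rw [Real.norm_eq_abs, div_mul_eq_mul_div, le_div_iff₀ hrpos]
        linarith [habs]
    have h4 : ‖f‖ * r ≤ f c - u := (le_div_iff₀ hrpos).1 hb
    nlinarith

set_option maxHeartbeats 1000000 in
theorem stmt3 {X : Type*} [NormedAddCommGroup X] [NormedSpace ℝ X] [CompleteSpace X]
    (𝒜 : Set (Set X)) (h𝒜 : IsCompatible 𝒜)
    (f₀ : X →L[ℝ] ℝ) (hf₀ : ‖f₀‖ = 1)
    (hsep : ∀ A ∈ 𝒜, ∀ x₀ : X, f₀ x₀ < sInf (f₀ '' A) →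
      ∃ (n : ℕ) (c : Fin n → X) (r : Fin n → ℝ),
        A ⊆ closure (convexHull ℝ (⋃ i, closedBall (c i) (r i))) ∧
        x₀ ∉ closure (convexHull ℝ (⋃ i, closedBall (c i) (r i)))) :
    IsASemiPC 𝒜 f₀ := by
  intro A hA ε hε
  rcases A.eq_empty_or_nonempty with rfl | ⟨a₀, ha₀⟩
  · refine ⟨univ, isOpen_univ, ⟨0, by simp⟩, ?_⟩
    intro g _
    exact ⟨1, one_pos, g, by
      simp [seminormBall, dualSeminormOn, Real.sSup_empty, hε], (one_smul ℝ g).symm⟩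
  -- pick z with f₀ z = 1
  have hf₀ne : f₀ ≠ 0 := by
    intro h; rw [h] at hf₀; simp at hf₀
  obtain ⟨z₀, hz₀⟩ := DFunLike.ne_iff.1 hf₀ne
  set z : X := (f₀ z₀)⁻¹ • z₀ with hzdef
  have hz₀' : f₀ z₀ ≠ 0 := by simpa using hz₀
  have hz : f₀ z = 1 := by
    rw [hzdef, map_smul, smul_eq_mul, inv_mul_cancel₀ hz₀']
  -- bound on A
  obtain ⟨M, hM⟩ := isBounded_iff_forall_norm_le.1 (h𝒜.bounded A hA)
  set m : ℝ := max M 0 + 1 with hmdef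
  have hm : 0 < m := by positivity
  have hfa : ∀ a ∈ A, |f₀ a| ≤ m := by
    intro a ha
    have h1 : |f₀ a| ≤ ‖f₀‖ * ‖a‖ := f₀.le_opNorm a
    rw [hf₀, one_mul] at h1
    have := hM a ha
    have : ‖a‖ ≤ max M 0 := le_trans this (le_max_left _ _)
    linarith
  set vm : X → X := fun a => a - f₀ a • z with hvmdef
  set K : Set X := closure (absConvexHull ℝ A) with hKdef
  have hK : K ∈ 𝒜 := h𝒜.closure_absConvexHull_mem A hA
  set K1 : Set X := (fun a => a + m • z) '' K with hK1def
  have hK1 : K1 ∈ 𝒜 := h𝒜.translate_mem K hK (m • z)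
  set G : Set X := closure (absConvexHull ℝ K1) with hGdef
  have hG : G ∈ 𝒜 := h𝒜.closure_absConvexHull_mem K1 hK1
  have hvmG : ∀ a ∈ A, vm a ∈ absConvexHull ℝ K1 := by
    intro a ha
    set θ : ℝ := (m + -f₀ a) / (2 * m) with hθdef
    have hθ0 : 0 ≤ θ := by
      apply div_nonneg _ (by linarith)
      have := (abs_le.1 (hfa a ha)).2
      linarith
    have hθ1 : θ ≤ 1 := by
      rw [hθdef, div_le_one (by linarith)]
      have := (abs_le.1 (hfa a ha)).1
      linarith
    have hp₁ : a + m • z ∈ absConvexHull ℝ K1 := by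
      apply subset_absConvexHull
      exact ⟨a, subset_closure (subset_absConvexHull ha), rfl⟩
    have hp₂ : a - m • z ∈ absConvexHull ℝ K1 := by
      have hna : -a + m • z ∈ absConvexHull ℝ K1 := by
        apply subset_absConvexHull
        refine ⟨-a, ?_, rfl⟩
        apply subset_closure
        exact (balanced_absConvexHull (𝕜 := ℝ)).neg_mem_iff.2 (subset_absConvexHull ha)
      have h := (balanced_absConvexHull (𝕜 := ℝ)).neg_mem_iff.2 hna
      have he : -(-a + m • z) = a - m • z := by abel
      rwa [he] at h
    have hcombo := (convex_absConvexHull (𝕜 := ℝ) (s := K1)) hp₁ hp₂ hθ0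
      (by linarith : (0:ℝ) ≤ 1 - θ) (by ring)
    have heq : θ • (a + m • z) + (1 - θ) • (a - m • z) = vm a := by
      have h2 : 2 * θ * m - m = -f₀ a := by
        rw [hθdef]; field_simp; ring
      have : θ • (a + m • z) + (1 - θ) • (a - m • z) = a + (2 * θ * m - m) • z := by
        module
      rw [this, h2, hvmdef]
      simp [sub_eq_add_neg]
    rwa [heq] at hcombo
  have hvmG' : ∀ a ∈ A, vm a ∈ G ∧ -vm a ∈ G := fun a ha =>
    ⟨subset_closure (hvmG a ha),
     subset_closure ((balanced_absConvexHull (𝕜 := ℝ)).neg_mem_iff.2 (hvmG a ha))⟩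
  set S₀ : Set X := vm '' A ∪ (fun a => -vm a) '' A with hS₀def
  have hS₀ : S₀ ∈ 𝒜 := by
    apply h𝒜.mem_of_subset G hG
    rintro x (⟨a, ha, rfl⟩ | ⟨a, ha, rfl⟩)
    · exact (hvmG' a ha).1
    · exact (hvmG' a ha).2
  set w : X := (ε / 2) • z with hwdef
  set H : Set X := (fun x => x + w) '' S₀ with hHdef
  have hH : H ∈ 𝒜 := h𝒜.translate_mem S₀ hS₀ w
  have hf₀vm : ∀ a : X, f₀ (vm a) = 0 := by
    intro a; simp [hvmdef, hz]
  have hf₀H : ∀ x ∈ H, f₀ x = ε / 2 := by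
    rintro x ⟨y, hy, rfl⟩
    have hy0 : f₀ y = 0 := by
      rcases hy with ⟨a, _, rfl⟩ | ⟨a, _, rfl⟩
      · exact hf₀vm a
      · simp [hf₀vm a]
    simp [map_add, hy0, hwdef, hz]
  have hHmem : ∀ a ∈ A, vm a + w ∈ H ∧ -vm a + w ∈ H := by
    intro a ha
    exact ⟨⟨vm a, Or.inl ⟨a, ha, rfl⟩, rfl⟩, ⟨-vm a, Or.inr ⟨a, ha, rfl⟩, rfl⟩⟩
  have himg : f₀ '' H = {ε / 2} := by
    apply Subset.antisymm
    · rintro y ⟨x, hx, rfl⟩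
      exact hf₀H x hx
    · rintro y rfl
      exact ⟨vm a₀ + w, (hHmem a₀ ha₀).1, hf₀H _ (hHmem a₀ ha₀).1⟩
  obtain ⟨n, c, r, hsub, hx₀⟩ := hsep H hH 0 (by
    rw [himg, csInf_singleton, map_zero]; linarith)
  set D : Set X := closure (convexHull ℝ (⋃ i, closedBall (c i) (r i))) with hDdef
  have hballD : ∀ i, closedBall (c i) (r i) ⊆ D := fun i =>
    (subset_iUnion (fun j => closedBall (c j) (r j)) i).trans
      ((subset_convexHull ℝ _).trans subset_closure)
  obtain ⟨φ, u, hu0, hφ⟩ := geometric_hahn_banach_point_closed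
    ((convex_convexHull ℝ _).closure) isClosed_closure hx₀
  have hupos : 0 < u := by simpa using hu0
  have hφne : φ ≠ 0 := by
    intro h
    have h1 := hφ _ (hsub (hHmem a₀ ha₀).1)
    rw [h] at h1; simp at h1; linarith
  have hφn : 0 < ‖φ‖ := norm_pos_iff.2 hφne
  set β : ℝ := u / ‖φ‖ with hβdef
  have hβ : 0 < β := div_pos hupos hφn
  set h₀ : X →L[ℝ] ℝ := ‖φ‖⁻¹ • φ with hh₀def
  have hh₀n : ‖h₀‖ = 1 := by
    rw [hh₀def]
    rw [norm_smul (‖φ‖⁻¹) φ, norm_inv, norm_norm, inv_mul_cancel₀ hφn.ne']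
  have hh₀D : ∀ x ∈ D, β ≤ h₀ x := by
    intro x hx
    have := (hφ x hx).le
    rw [hh₀def, hβdef]
    simp only [ContinuousLinearMap.smul_apply, smul_eq_mul]
    rw [div_eq_inv_mul]
    exact mul_le_mul_of_nonneg_left this (inv_nonneg.2 hφn.le)
  have hcent : ∀ i, 0 ≤ r i → β + r i ≤ h₀ (c i) := by
    intro i hri
    have := ball_norming_aux h₀ hri (fun x hx => hh₀D x (hballD i hx))
    rwa [hh₀n, mul_one] at this
  set W : Set (X →L[ℝ] ℝ) := {g | ∀ i, 0 ≤ r i → β / 2 + r i < g (c i)} with hWdef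
  refine ⟨W, ?_, ⟨h₀, ?_, ?_⟩, ?_⟩
  · -- weak* open
    show IsOpen (show Set (WeakDual ℝ X) from W)
    have hWeq : (show Set (WeakDual ℝ X) from W) =
        ⋂ i, {g : WeakDual ℝ X | 0 ≤ r i → β / 2 + r i < g (c i)} := by
      ext g; simp [hWdef, Set.mem_iInter]; rfl
    rw [hWeq]
    apply isOpen_iInter_of_finite
    intro i
    by_cases hri : 0 ≤ r i
    · have : {g : WeakDual ℝ X | 0 ≤ r i → β / 2 + r i < g (c i)} =
          {g : WeakDual ℝ X | β / 2 + r i < g (c i)} := by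
        ext g; simp [hri]
      rw [this]
      exact isOpen_lt continuous_const (WeakDual.eval_continuous (c i))
    · have : {g : WeakDual ℝ X | 0 ≤ r i → β / 2 + r i < g (c i)} = univ := by
        ext g; simp [hri]
      rw [this]; exact isOpen_univ
  · -- h₀ ∈ W
    intro i hri
    have := hcent i hri
    linarith
  · -- h₀ ∈ closed ball
    rw [mem_closedBall_zero_iff, hh₀n]
  · -- inclusion into cone
    rintro g ⟨hgW, hgB⟩
    have hgn : ‖g‖ ≤ 1 := mem_closedBall_zero_iff.1 hgB
    have hgD : ∀ x ∈ D, β / 2 ≤ g x := by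
      have hP : convexHull ℝ (⋃ i, closedBall (c i) (r i)) ⊆ {y | β / 2 ≤ g y} := by
        apply convexHull_min
        · rintro y hy
          rw [mem_iUnion] at hy
          obtain ⟨i, hyi⟩ := hy
          by_cases hri : 0 ≤ r i
          · have hd : ‖y - c i‖ ≤ r i := by
              rw [← dist_eq_norm]; exact mem_closedBall.1 hyi
            have h2 : |g (y - c i)| ≤ r i := by
              have := g.le_opNorm (y - c i)
              rw [Real.norm_eq_abs] at this
              nlinarith [norm_nonneg (y - c i)]
            have h3 : g y = g (c i) + g (y - c i) := by
              rw [← map_add]; congr 1; abel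
            have h4 := hgW i hri
            have := (abs_le.1 h2).1
            rw [mem_setOf_eq, h3]
            linarith
          · exfalso
            rw [closedBall_eq_empty.2 (lt_of_not_ge hri)] at hyi
            exact hyi
        · exact convex_halfSpace_ge (IsLinearMap.mk g.map_add g.map_smul) (β / 2)
      intro x hx
      exact closure_minimal hP (isClosed_le continuous_const g.continuous) hx
    have key : ∀ a ∈ A, |g (vm a)| ≤ ε / 2 * g z - β / 2 := by
      intro a ha
      have hgw : g w = ε / 2 * g z := by
        rw [hwdef, map_smul]; simp
      have h1 := hgD _ (hsub (hHmem a ha).1)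
      have h2 := hgD _ (hsub (hHmem a ha).2)
      rw [map_add, hgw] at h1
      rw [map_add, map_neg, hgw] at h2
      rw [abs_le]
      constructor <;> linarith
    have hl : 0 < g z := by
      have h1 := key a₀ ha₀
      have h2 := abs_nonneg (g (vm a₀))
      nlinarith
    refine ⟨g z, hl, (g z)⁻¹ • g, ?_, (smul_inv_smul₀ hl.ne' g).symm⟩
    show dualSeminormOn A ((g z)⁻¹ • g - f₀) < ε
    have hbnd : ∀ y ∈ (fun x => |((g z)⁻¹ • g - f₀) x|) '' A, y ≤ ε / 2 := by
      rintro y ⟨a, ha, rfl⟩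
      show |((g z)⁻¹ • g - f₀) a| ≤ ε / 2
      have hgvm : g (vm a) = g a - f₀ a * g z := by
        show g (a - f₀ a • z) = _
        rw [map_sub, map_smul]; simp
      have hval : ((g z)⁻¹ • g - f₀) a = (g z)⁻¹ * g (vm a) := by
        simp only [ContinuousLinearMap.sub_apply, ContinuousLinearMap.smul_apply,
          smul_eq_mul, hgvm]
        field_simp
      rw [hval, abs_mul, abs_of_pos (inv_pos.2 hl)]
      have h1 := key a ha
      have h2 : (g z)⁻¹ * |g (vm a)| ≤ (g z)⁻¹ * (ε / 2 * g z - β / 2) :=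
        mul_le_mul_of_nonneg_left h1 (inv_pos.2 hl).le
      have h3 : (g z)⁻¹ * (ε / 2 * g z - β / 2) ≤ ε / 2 := by
        have he : (g z)⁻¹ * (ε / 2 * g z - β / 2) = ε / 2 - (g z)⁻¹ * (β / 2) := by
          field_simp
        rw [he]
        have : 0 ≤ (g z)⁻¹ * (β / 2) := by positivity
        linarith
      linarith
    calc dualSeminormOn A ((g z)⁻¹ • g - f₀) ≤ ε / 2 :=
          Real.sSup_le hbnd (by linarith)
      _ < ε := by linarith
end

section
/- Let 𝒜 be a compatible collection of bounded subsets of a Banach space X. If the cone generated by the set of 𝒜-semi points of continuity of B_{X*} is τ_𝒜-dense in X*, then X has 𝒜-Property (II), i.e., every closed convex set A ∈ 𝒜 is an intersection of closed convex hulls of finitely many closed balls. -/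
open Metric Set Pointwise

variable {X : Type*} [NormedAddCommGroup X] [NormedSpace ℝ X]

section Aux

-- ### Auxiliary lemmas

lemma abs_le_dualSeminormOn {A : Set X} (hA : Bornology.IsBounded A) (f : X →L[ℝ] ℝ)
    {y : X} (hy : y ∈ A) : |f y| ≤ dualSeminormOn A f := by
  obtain ⟨C, hC⟩ := isBounded_iff_forall_norm_le.mp hA
  apply le_csSup
  · refine ⟨‖f‖ * C, ?_⟩
    rintro _ ⟨x, hx, rfl⟩
    calc |f x| = ‖f x‖ := (Real.norm_eq_abs _).symm
    _ ≤ ‖f‖ * ‖x‖ := f.le_opNorm x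
    _ ≤ ‖f‖ * C := by
        have := hC x hx
        nlinarith [norm_nonneg f]
  · exact ⟨y, hy, rfl⟩

lemma exists_finset_of_weakStarOpen {U : Set (X →L[ℝ] ℝ)} (hU : IsWeakStarOpen U)
    {k₁ : X →L[ℝ] ℝ} (hk₁ : k₁ ∈ U) :
    ∃ (I : Finset X) (δ : ℝ), 0 < δ ∧
      {k : X →L[ℝ] ℝ | ∀ x ∈ I, |k x - k₁ x| < δ} ⊆ U := by
  have hU' : @IsOpen _ (TopologicalSpace.induced
      (fun (k : WeakDual ℝ X) (y : X) => k y) Pi.topologicalSpace) U := hU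
  obtain ⟨O, hO, hOU⟩ := isOpen_induced_iff.mp hU'
  have hmem : (fun (y : X) => k₁ y) ∈ O := by
    have : (k₁ : WeakDual ℝ X) ∈ U := hk₁
    rw [← hOU] at this
    exact this
  obtain ⟨I, u, hu, hpi⟩ := isOpen_pi_iff.mp hO _ hmem
  have hδ : ∀ a ∈ I, ∃ δ > 0, ball (k₁ a) δ ⊆ u a := by
    intro a ha
    obtain ⟨ho, hm⟩ := hu a ha
    exact Metric.isOpen_iff.mp ho _ hm
  choose! δf hδf hball using hδ
  rcases I.eq_empty_or_nonempty with hI | hI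
  · refine ⟨I, 1, one_pos, ?_⟩
    intro k _
    have : (fun y : X => k y) ∈ O := by
      apply hpi
      intro a ha
      simp [hI] at ha
    rw [← hOU]; exact this
  · refine ⟨I, I.inf' hI δf, ?_, ?_⟩
    · rw [Finset.lt_inf'_iff]
      intro a ha; exact hδf a ha
    · intro k hk
      have : (fun y : X => k y) ∈ O := by
        apply hpi
        intro a ha
        apply hball a ha
        rw [mem_ball, Real.dist_eq]
        exact lt_of_lt_of_le (hk a ha) (Finset.inf'_le _ ha)
      rw [← hOU]; exact this

lemma exists_near_norming_s4 (k : X →L[ℝ] ℝ) (hk : ‖k‖ = 1) {η : ℝ} (hη : 0 < η) :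
    ∃ w : X, ‖w‖ ≤ 1 ∧ 1 - η < k w := by
  obtain ⟨x, hx, hlt⟩ := k.exists_lt_apply_of_lt_opNorm (r := 1 - η) (by rw [hk]; linarith)
  rw [Real.norm_eq_abs] at hlt
  rcases le_or_gt 0 (k x) with h | h
  · exact ⟨x, hx.le, by rwa [abs_of_nonneg h] at hlt⟩
  · refine ⟨-x, by simpa using hx.le, ?_⟩
    rw [map_neg]
    rwa [abs_of_neg h] at hlt

lemma support_le {k : X →L[ℝ] ℝ} (hk : ‖k‖ = 1) {c : X} {r u : ℝ} (hr : 0 ≤ r)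
    (h : ∀ y ∈ closedBall c r, k y < u) : k c + r ≤ u := by
  by_contra hcon
  push_neg at hcon
  rcases eq_or_lt_of_le hr with hr0 | hr'
  · have := h c (mem_closedBall_self hr)
    rw [← hr0] at hcon
    linarith
  · set η := (k c + r - u) / r with hηdef
    have hη : 0 < η := div_pos (by linarith) hr'
    obtain ⟨w, hw1, hw2⟩ := exists_near_norming_s4 k hk hη
    have hy : c + r • w ∈ closedBall c r := by
      rw [mem_closedBall, dist_eq_norm]
      have : c + r • w - c = r • w := by abel
      rw [this, norm_smul, Real.norm_eq_abs, abs_of_pos hr']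
      nlinarith
    have hval := h _ hy
    rw [map_add, map_smul, smul_eq_mul] at hval
    have hrη : r * η = k c + r - u := by
      rw [hηdef]; field_simp
    nlinarith

lemma coneOf_smul {C : Set (X →L[ℝ] ℝ)} {k : X →L[ℝ] ℝ} (hk : k ∈ coneOf C) {t : ℝ}
    (ht : 0 < t) : t • k ∈ coneOf C := by
  obtain ⟨l, hl, h, hh, rfl⟩ := hk
  exact ⟨t * l, mul_pos ht hl, h, hh, by rw [smul_smul]⟩

lemma isFinBallHull_list (L : List (X × ℝ)) :
    IsFinBallHull (closure (convexHull ℝ (⋃ p ∈ L, closedBall p.1 p.2))) := by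
  refine ⟨L.length, fun i => (L.get i).1, fun i => (L.get i).2, ?_⟩
  have : (⋃ p ∈ L, closedBall p.1 p.2) = ⋃ i, closedBall ((L.get i).1) ((L.get i).2) := by
    ext y
    simp only [Set.mem_iUnion]
    constructor
    · rintro ⟨p, hp, hy⟩
      obtain ⟨i, rfl⟩ := List.mem_iff_get.mp hp
      exact ⟨i, hy⟩
    · rintro ⟨i, hy⟩
      exact ⟨L.get i, List.get_mem L i, hy⟩
  rw [this]

lemma image_add_closedBall (v c : X) (r : ℝ) :
    (fun y => y + v) '' closedBall c r = closedBall (c + v) r := by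
  ext z
  constructor
  · rintro ⟨y, hy, rfl⟩
    simpa [dist_eq_norm] using hy
  · intro hz
    refine ⟨z - v, ?_, sub_add_cancel z v⟩
    simp only [mem_closedBall, dist_eq_norm] at hz ⊢
    calc ‖z - v - c‖ = ‖z - (c + v)‖ := by rw [sub_sub, add_comm v c]
    _ ≤ r := hz

lemma IsFinBallHull.translate {S : Set X} (h : IsFinBallHull S) (v : X) :
    IsFinBallHull ((fun y => y + v) '' S) := by
  obtain ⟨n, c, r, rfl⟩ := h
  refine ⟨n, fun i => c i + v, r, ?_⟩
  have h1 : (fun y : X => y + v) '' closure (convexHull ℝ (⋃ i, closedBall (c i) (r i)))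
      = closure ((fun y : X => y + v) '' convexHull ℝ (⋃ i, closedBall (c i) (r i))) :=
    (Homeomorph.addRight v).image_closure _
  have h2 : (fun y : X => y + v) '' convexHull ℝ (⋃ i, closedBall (c i) (r i))
      = convexHull ℝ ((fun y : X => y + v) '' ⋃ i, closedBall (c i) (r i)) := by
    have := (AffineEquiv.vaddConst ℝ v).toAffineMap.image_convexHull
      (⋃ i, closedBall (c i) (r i))
    simpa using this
  rw [h1, h2, image_iUnion]
  simp only [image_add_closedBall]

set_option maxHeartbeats 1000000 in
lemma key_construction (𝒜 : Set (Set X)) (h𝒜 : IsCompatible 𝒜)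
    (hdense : ∀ g : X →L[ℝ] ℝ, ∀ (n : ℕ) (A : Fin n → Set X), (∀ i, A i ∈ 𝒜) →
      ∀ ε > (0 : ℝ), ∃ h ∈ coneOf {f : X →L[ℝ] ℝ | ‖f‖ = 1 ∧ IsASemiPC 𝒜 f},
        ∀ i, dualSeminormOn (A i) (g - h) < ε)
    (A : Set X) (hA : A ∈ 𝒜) (hAc : IsClosed A) (hAv : Convex ℝ A) (h0 : (0:X) ∈ A)
    (x₀ : X) (hx₀ : x₀ ∉ A) :
    ∃ S : Set X, IsFinBallHull S ∧ A ⊆ S ∧ x₀ ∉ S := by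
  classical
  -- a uniform bound R
  obtain ⟨R₀, hR₀⟩ := isBounded_iff_forall_norm_le.mp (h𝒜.bounded A hA)
  set R : ℝ := max 1 (max R₀ ‖x₀‖) with hRdef
  have hR1 : (1:ℝ) ≤ R := le_max_left _ _
  have hR0 : (0:ℝ) < R := lt_of_lt_of_le one_pos hR1
  have hRA : ∀ a ∈ A, ‖a‖ ≤ R := fun a ha =>
    le_trans (hR₀ a ha) (le_trans (le_max_left _ _) (le_max_right _ _))
  clear_value R
  -- separation
  obtain ⟨g, u, hgA, hgx⟩ := geometric_hahn_banach_closed_point hAv hAc hx₀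
  have hu : 0 < u := by simpa using hgA 0 h0
  have hd0 : 0 < g x₀ - u := by linarith only [hgx]
  set d : ℝ := g x₀ - u with hd
  clear_value d
  -- the compatible superset B'
  set B' : Set X := closure (absConvexHull ℝ (A ∪ {x₀})) with hB'
  have hB'mem : B' ∈ 𝒜 := h𝒜.closure_absConvexHull_mem _ (h𝒜.union_singleton_mem A hA x₀)
  have hB'bdd : Bornology.IsBounded B' := h𝒜.bounded B' hB'mem
  have hAB' : A ⊆ B' :=
    (Set.subset_union_left).trans ((subset_absConvexHull).trans subset_closure)
  have hx₀B' : x₀ ∈ B' := by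
    apply subset_closure
    apply subset_absConvexHull
    exact Or.inr rfl
  -- density: approximate g by a positive multiple of a semi-PC
  obtain ⟨h, hhcone, hsem⟩ := hdense g 1 (fun _ => B') (fun _ => hB'mem) (d/3)
    (by linarith only [hd0])
  obtain ⟨l, hl, f₀, hf₀mem, rfl⟩ := hhcone
  obtain ⟨hf₀norm, hf₀PC⟩ := hf₀mem
  have hgh : ∀ y ∈ B', |g y - l * f₀ y| < d/3 := by
    intro y hy
    have h1 := abs_le_dualSeminormOn hB'bdd (g - l • f₀) hy
    have h2 : (g - l • f₀) y = g y - l * f₀ y := by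
      simp [ContinuousLinearMap.sub_apply]
    rw [h2] at h1
    exact lt_of_le_of_lt h1 (hsem 0)
  set p : ℝ := (u + d/3)/l with hp
  set q : ℝ := (u + 2*d/3)/l with hq
  clear_value p q
  have hpq : p < q := by
    rw [hp, hq, div_lt_div_iff_of_pos_right hl]
    linarith only [hd0]
  have hp0 : 0 < p := by rw [hp]; exact div_pos (by linarith only [hu, hd0]) hl
  have hfa : ∀ a ∈ A, f₀ a < p := by
    intro a ha
    obtain ⟨h1a, h1b⟩ := abs_lt.mp (hgh a (hAB' ha))
    have h2 := hgA a ha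
    rw [hp, lt_div_iff₀ hl]
    linarith only [h1a, h2, mul_comm (f₀ a) l]
  have hfx : q < f₀ x₀ := by
    obtain ⟨h1a, h1b⟩ := abs_lt.mp (hgh x₀ hx₀B')
    rw [hq, div_lt_iff₀ hl]
    have hgx0 : g x₀ = u + d := by rw [hd]; ring
    linarith only [h1b, hgx0, mul_comm (f₀ x₀) l]
  have hq0 : 0 < q := lt_trans hp0 hpq
  set ε' : ℝ := (q - p)/3 with hε'def
  clear_value ε'
  have hε' : 0 < ε' := by rw [hε'def]; linarith only [hpq]
  have hqε : 0 < q - ε' := by rw [hε'def]; linarith only [hpq, hp0, hq0]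
  have hpε : 0 < p + ε' := by rw [hε'def]; linarith only [hpq, hp0]
  set θ : ℝ := (p + ε')/(q - ε') with hθdef
  clear_value θ
  have hθ0 : 0 < θ := by rw [hθdef]; exact div_pos hpε hqε
  have hθ1 : θ < 1 := by
    rw [hθdef, div_lt_one hqε, hε'def]; linarith only [hpq]
  -- the cone estimate
  have coneFact : ∀ k ∈ coneOf (seminormBall B' f₀ ε'),
      0 < k x₀ ∧ ∀ a ∈ A, k a ≤ θ * k x₀ := by
    rintro k ⟨μ, hμ, m, hm, rfl⟩
    have hmB : ∀ y ∈ B', |m y - f₀ y| < ε' := by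
      intro y hy
      have h1 := abs_le_dualSeminormOn hB'bdd (m - f₀) hy
      have h2 : (m - f₀) y = m y - f₀ y := by simp [ContinuousLinearMap.sub_apply]
      rw [h2] at h1
      exact lt_of_le_of_lt h1 hm
    have hmx : q - ε' < m x₀ := by
      obtain ⟨ta, tb⟩ := abs_lt.mp (hmB x₀ hx₀B')
      linarith only [ta, hfx]
    have hmx0 : 0 < m x₀ := lt_trans hqε hmx
    constructor
    · show 0 < (μ • m) x₀
      rw [ContinuousLinearMap.smul_apply, smul_eq_mul]
      exact mul_pos hμ hmx0
    · intro a ha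
      obtain ⟨t1a, t1b⟩ := abs_lt.mp (hmB a (hAB' ha))
      have h2 : m a < p + ε' := by
        have := hfa a ha
        linarith only [t1b, this]
      have h3 : p + ε' = θ * (q - ε') := by
        rw [hθdef, div_mul_cancel₀ _ hqε.ne']
      have h4 : θ * (q - ε') ≤ θ * m x₀ := mul_le_mul_of_nonneg_left hmx.le hθ0.le
      have h5 : m a ≤ θ * m x₀ := by linarith only [h2, h3, h4]
      show (μ • m) a ≤ θ * ((μ • m) x₀)
      rw [ContinuousLinearMap.smul_apply, ContinuousLinearMap.smul_apply, smul_eq_mul,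
        smul_eq_mul]
      have h6 := mul_le_mul_of_nonneg_left h5 hμ.le
      linarith only [h6]
  -- semi-PC gives a weak* open set
  obtain ⟨U, hUopen, hUne, hUsub⟩ := hf₀PC B' hB'mem ε' hε'
  obtain ⟨k₁, hk₁U, hk₁B⟩ := hUne
  have hk₁cone := hUsub ⟨hk₁U, hk₁B⟩
  have hk₁x := (coneFact k₁ hk₁cone).1
  have hk₁ne : k₁ ≠ 0 := by
    intro hk
    rw [hk] at hk₁x
    simp at hk₁x
  set ν : ℝ := ‖k₁‖ with hνdef
  have hν0 : 0 < ν := norm_pos_iff.mpr hk₁ne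
  have hν1 : ν ≤ 1 := by rwa [mem_closedBall_zero_iff] at hk₁B
  clear_value ν
  obtain ⟨I, δ₀, hδ₀, hNsub⟩ := exists_finset_of_weakStarOpen hUopen hk₁U
  set δ : ℝ := min δ₀ ν with hδdef
  have hδpos : 0 < δ := lt_min hδ₀ hν0
  have hδδ₀ : δ ≤ δ₀ := by rw [hδdef]; exact min_le_left _ _
  have hδν : δ ≤ ν := by rw [hδdef]; exact min_le_right _ _
  clear_value δ
  set δ' : ℝ := δ / ν with hδ'def
  have hδ'pos : 0 < δ' := div_pos hδpos hν0
  have hδ'le1 : δ' ≤ 1 := by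
    rw [hδ'def, div_le_one hν0]
    exact hδν
  clear_value δ'
  set k' : X →L[ℝ] ℝ := ν⁻¹ • k₁ with hk'def
  have hk'norm : ‖k'‖ = 1 := by
    rw [hk'def, norm_smul ν⁻¹ k₁, norm_inv, Real.norm_eq_abs, abs_of_pos hν0, ← hνdef,
      inv_mul_cancel₀ hν0.ne']
  have hk'val : ∀ x, k₁ x = ν * k' x := by
    intro x
    rw [hk'def, ContinuousLinearMap.smul_apply, smul_eq_mul]
    field_simp
  clear_value k'
  have QsubCone : ∀ k : X →L[ℝ] ℝ, ‖k‖ ≤ 1 → (∀ x ∈ I, |k x - k' x| < δ') →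
      k ∈ coneOf (seminormBall B' f₀ ε') := by
    intro k hk hkx
    have h1 : ν • k ∈ U := by
      apply hNsub
      intro x hx
      have e1 : (ν • k) x - k₁ x = ν * (k x - k' x) := by
        rw [hk'val x, ContinuousLinearMap.smul_apply, smul_eq_mul]; ring
      calc |(ν • k) x - k₁ x| = ν * |k x - k' x| := by
            rw [e1, abs_mul, abs_of_pos hν0]
      _ < ν * δ' := mul_lt_mul_of_pos_left (hkx x hx) hν0
      _ = δ := by rw [hδ'def, mul_div_cancel₀ _ hν0.ne']
      _ ≤ δ₀ := hδδ₀
    have h2 : ν • k ∈ closedBall (0 : X →L[ℝ] ℝ) 1 := by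
      rw [mem_closedBall_zero_iff, norm_smul ν k, Real.norm_eq_abs, abs_of_pos hν0]
      have h2a := mul_le_mul_of_nonneg_left hk hν0.le
      linarith only [h2a, hν1]
    have h3 := hUsub ⟨h1, h2⟩
    have h4 : k = ν⁻¹ • (ν • k) := by
      rw [smul_smul, inv_mul_cancel₀ hν0.ne', one_smul]
    rw [h4]
    exact coneOf_smul h3 (inv_pos.mpr hν0)
  have hk'cone : k' ∈ coneOf (seminormBall B' f₀ ε') := by
    apply QsubCone k' hk'norm.le
    intro x hx
    simpa using hδ'pos
  obtain ⟨hκ0, hk'A⟩ := coneFact k' hk'cone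
  set κ : ℝ := k' x₀ with hκdef
  clear_value κ
  -- norming direction w
  set C : ℝ := 1 + ∑ x ∈ I, |k' x| with hCdef
  clear_value C
  have hC1 : 1 ≤ C := by
    rw [hCdef]
    have : (0:ℝ) ≤ ∑ x ∈ I, |k' x| := Finset.sum_nonneg fun x _ => abs_nonneg _
    linarith only [this]
  have hC0 : 0 < C := lt_of_lt_of_le one_pos hC1
  have hCx : ∀ x ∈ I, |k' x| + 1 ≤ C := by
    intro x hx
    have := Finset.single_le_sum (f := fun x => |k' x|) (fun i _ => abs_nonneg _) hx
    rw [hCdef]; linarith only [this]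
  set η : ℝ := δ' / (2 * C) with hηdef
  have hη0 : 0 < η := div_pos hδ'pos (by linarith only [hC0])
  clear_value η
  obtain ⟨w, hw1, hw2⟩ := exists_near_norming_s4 k' hk'norm hη0
  have hw_le : ∀ k : X →L[ℝ] ℝ, ‖k‖ = 1 → k w ≤ 1 := by
    intro k hk
    calc k w ≤ |k w| := le_abs_self _
    _ = ‖k w‖ := (Real.norm_eq_abs _).symm
    _ ≤ ‖k‖ * ‖w‖ := k.le_opNorm w
    _ ≤ 1 := by rw [hk, one_mul]; exact hw1
  have hk'w1 : k' w ≤ 1 := hw_le k' hk'norm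
  -- constraint data
  set cc : X → ℝ := fun x => |k' x| + 1 with hccdef
  set zc : X → ℝ → X := fun x σ => σ • x + (cc x) • w with hzcdef
  set βc : X → ℝ → ℝ := fun x σ => σ * (k' x) - δ' + cc x with hβcdef
  have hccval : ∀ x, cc x = |k' x| + 1 := fun x => rfl
  have hβval : ∀ x σ, βc x σ = σ * (k' x) - δ' + cc x := fun x σ => rfl
  have hccpos : ∀ x, 0 < cc x := by
    intro x
    rw [hccval]
    have := abs_nonneg (k' x)
    linarith only [this]
  have hzval : ∀ (k : X →L[ℝ] ℝ) (x : X) (σ : ℝ), k (zc x σ) = σ * k x + cc x * k w := by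
    intro k x σ
    rw [hzcdef]
    simp [map_add, map_smul, smul_eq_mul]
  clear_value cc zc βc
  have hCη : C * η = δ'/2 := by
    rw [hηdef]
    field_simp
  have hccη : ∀ x ∈ I, cc x * (1 - k' w) ≤ δ'/2 := by
    intro x hx
    have h1 : cc x ≤ C := by rw [hccval]; exact hCx x hx
    have h2 : 1 - k' w ≤ η := by linarith only [hw2]
    have h3 : 0 ≤ 1 - k' w := by linarith only [hk'w1]
    calc cc x * (1 - k' w) ≤ C * (1 - k' w) := mul_le_mul_of_nonneg_right h1 h3
    _ ≤ C * η := mul_le_mul_of_nonneg_left h2 hC0.le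
    _ = δ'/2 := hCη
  have hgap : ∀ x ∈ I, ∀ σ : ℝ, δ'/2 ≤ k' (zc x σ) - βc x σ := by
    intro x hx σ
    rw [hzval, hβval]
    have h1 := hccη x hx
    nlinarith only [h1]
  have hzpos : ∀ x ∈ I, ∀ σ : ℝ, |σ| = 1 → 0 ≤ k' (zc x σ) := by
    intro x hx σ hσ
    rw [hzval]
    have e : |σ * k' x| = |k' x| := by rw [abs_mul, hσ, one_mul]
    have h1 : -(|k' x|) ≤ σ * k' x := by
      have h1a := neg_abs_le (σ * k' x)
      linarith only [h1a, e]
    have h2 : cc x * (1 - η) ≤ cc x * k' w := mul_le_mul_of_nonneg_left hw2.le (hccpos x).le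
    have h3 : cc x * η ≤ δ'/2 := by
      have h4 : cc x ≤ C := by rw [hccval]; exact hCx x hx
      have h4b := mul_le_mul_of_nonneg_right h4 hη0.le
      linarith only [h4b, hCη]
    have h5 := hccval x
    nlinarith only [h1, h2, h3, h5, hδ'le1]
  set lam : X → ℝ → ℝ := fun x σ => (R + 1)/(k' (zc x σ) - βc x σ) with hlamdef
  have hlamval : ∀ x σ, lam x σ = (R + 1)/(k' (zc x σ) - βc x σ) := fun x σ => rfl
  clear_value lam
  have hlampos : ∀ x ∈ I, ∀ σ : ℝ, 0 < lam x σ := by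
    intro x hx σ
    rw [hlamval]
    exact div_pos (by linarith only [hR0]) (by linarith only [hgap x hx σ, hδ'pos])
  have hlammul : ∀ x ∈ I, ∀ σ : ℝ, lam x σ * (k' (zc x σ) - βc x σ) = R + 1 := by
    intro x hx σ
    rw [hlamval]
    exact div_mul_cancel₀ _ (ne_of_gt (by linarith only [hgap x hx σ, hδ'pos]))
  set r₀ : ℝ := (1 - θ) * κ / 2 with hr₀def
  clear_value r₀
  have hr₀ : 0 < r₀ := by
    rw [hr₀def]
    have := mul_pos (by linarith only [hθ1] : (0:ℝ) < 1 - θ) hκ0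
    linarith only [this]
  set mkB : X → ℝ → X × ℝ :=
    fun x σ => (-(lam x σ) • zc x σ, max 0 (R + lam x σ * βc x σ)) with hmkBdef
  have hmkfst : ∀ x σ, (mkB x σ).1 = -(lam x σ) • zc x σ := fun x σ => rfl
  have hmksnd : ∀ x σ, (mkB x σ).2 = max 0 (R + lam x σ * βc x σ) := fun x σ => rfl
  clear_value mkB
  set L : List (X × ℝ) :=
    (θ • x₀, r₀) :: (I.toList.flatMap (fun x => [mkB x 1, mkB x (-1)])) with hLdef
  set S : Set X := closure (convexHull ℝ (⋃ p ∈ L, closedBall p.1 p.2)) with hSdef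
  have hShull : IsFinBallHull S := isFinBallHull_list L
  have hSconv : Convex ℝ S := (convex_convexHull ℝ _).closure
  have hSclosed : IsClosed S := isClosed_closure
  have hballsubS : ∀ p ∈ L, closedBall p.1 p.2 ⊆ S := by
    intro p hp
    refine subset_trans ?_ (subset_trans (subset_convexHull ℝ _) subset_closure)
    exact subset_iUnion₂ (s := fun p _ => closedBall p.1 p.2) p hp
  have hmem0 : (θ • x₀, r₀) ∈ L := by rw [hLdef]; exact List.mem_cons_self
  have hLmem : ∀ p ∈ L, p = (θ • x₀, r₀) ∨ ∃ x ∈ I, ∃ σ : ℝ, |σ| = 1 ∧ p = mkB x σ := by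
    intro p hp
    rw [hLdef, List.mem_cons] at hp
    rcases hp with hp | hp
    · exact Or.inl hp
    · right
      rw [List.mem_flatMap] at hp
      obtain ⟨x, hx, hmem⟩ := hp
      have hxI : x ∈ I := Finset.mem_toList.mp hx
      simp only [List.mem_cons, List.mem_singleton, List.not_mem_nil, or_false] at hmem
      rcases hmem with rfl | rfl
      · exact ⟨x, hxI, 1, by norm_num, rfl⟩
      · exact ⟨x, hxI, -1, by norm_num, rfl⟩
  have hvalball : ∀ (c : X) (r : ℝ) (k : X →L[ℝ] ℝ), ‖k‖ = 1 →
      ∀ y ∈ closedBall c r, k y ≤ k c + r := by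
    intro c r k hk y hy
    rw [mem_closedBall, dist_eq_norm] at hy
    have h1 : k y - k c = k (y - c) := (map_sub k y c).symm
    have h2 : k (y - c) ≤ r := by
      calc k (y - c) ≤ ‖k (y - c)‖ := by rw [Real.norm_eq_abs]; exact le_abs_self _
      _ ≤ ‖k‖ * ‖y - c‖ := k.le_opNorm _
      _ ≤ r := by rw [hk, one_mul]; exact hy
    linarith only [h1, h2]
  -- exclusion of x₀
  set κ' : ℝ := max ((1+θ)*κ/2) 0 with hκ'def
  have hκ'0 : 0 ≤ κ' := le_max_right _ _
  clear_value κ'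
  have hκ'κ : κ' < κ := by
    rw [hκ'def]
    apply max_lt
    · have := mul_pos (by linarith only [hθ1] : (0:ℝ) < 1 - θ) hκ0
      linarith only [this]
    · exact hκ0
  have hexcl : ∀ p ∈ L, k' p.1 + p.2 ≤ κ' := by
    intro p hp
    rcases hLmem p hp with rfl | ⟨x, hxI, σ, hσ, rfl⟩
    · show k' (θ • x₀) + r₀ ≤ κ'
      have e : k' (θ • x₀) = θ * κ := by rw [map_smul, smul_eq_mul, hκdef]
      rw [e, hr₀def, hκ'def]
      have e2 : θ * κ + (1-θ)*κ/2 = (1+θ)*κ/2 := by ring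
      rw [e2]
      exact le_max_left _ _
    · rw [hmkfst, hmksnd]
      have e1 : k' (-(lam x σ) • zc x σ) = -(lam x σ) * k' (zc x σ) := by
        rw [map_smul, smul_eq_mul]
      rw [e1]
      rcases le_or_gt (R + lam x σ * βc x σ) 0 with hc | hc
      · rw [max_eq_left hc]
        have hmn := mul_nonneg (hlampos x hxI σ).le (hzpos x hxI σ hσ)
        linarith only [hmn, hκ'0]
      · rw [max_eq_right hc.le]
        have h3 := hlammul x hxI σ
        nlinarith only [h3, hκ'0]
  have hSupper : ∀ y ∈ S, k' y ≤ κ' := by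
    intro y hy
    have hhalf : (⋃ p ∈ L, closedBall p.1 p.2) ⊆ {y : X | k' y ≤ κ'} := by
      intro y hy'
      rw [mem_iUnion₂] at hy'
      obtain ⟨pp, hpp, hyp⟩ := hy'
      exact le_trans (hvalball pp.1 pp.2 k' hk'norm y hyp) (hexcl pp hpp)
    have hconvex : Convex ℝ {y : X | k' y ≤ κ'} :=
      convex_halfSpace_le (IsLinearMap.mk k'.map_add k'.map_smul) κ'
    have hclosed2 : IsClosed {y : X | k' y ≤ κ'} :=
      isClosed_le k'.continuous continuous_const
    exact closure_minimal (convexHull_min hhalf hconvex) hclosed2 hy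
  have hx₀S : x₀ ∉ S := by
    intro hy
    have h1 := hSupper x₀ hy
    rw [← hκdef] at h1
    linarith only [h1, hκ'κ]
  -- containment of A
  have hAS : A ⊆ S := by
    intro a ha
    by_contra hns
    obtain ⟨k, u', hall, hlt⟩ := geometric_hahn_banach_closed_point hSconv hSclosed hns
    have hy₀ : θ • x₀ ∈ S := hballsubS _ hmem0 (mem_closedBall_self hr₀.le)
    have hkne : k ≠ 0 := by
      intro hk
      have h1 := hall _ hy₀
      have h2 := hlt
      rw [hk] at h1 h2
      simp only [ContinuousLinearMap.zero_apply] at h1 h2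
      linarith only [h1, h2]
    have hn0 : 0 < ‖k‖ := norm_pos_iff.mpr hkne
    set k2 : X →L[ℝ] ℝ := ‖k‖⁻¹ • k with hk2def
    have hk2norm : ‖k2‖ = 1 := by
      rw [hk2def, norm_smul (‖k‖⁻¹) k, norm_inv, norm_norm, inv_mul_cancel₀ hn0.ne']
    set u2 : ℝ := ‖k‖⁻¹ * u' with hu2def
    clear_value u2
    have hall' : ∀ y ∈ S, k2 y < u2 := by
      intro y hy
      rw [hk2def, ContinuousLinearMap.smul_apply, smul_eq_mul, hu2def]
      exact mul_lt_mul_of_pos_left (hall y hy) (inv_pos.mpr hn0)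
    have hlt' : u2 < k2 a := by
      rw [hk2def, ContinuousLinearMap.smul_apply, smul_eq_mul, hu2def]
      exact mul_lt_mul_of_pos_left hlt (inv_pos.mpr hn0)
    by_cases hG : ∀ x ∈ I, |k2 x - k' x| < δ'
    · have hcone := QsubCone k2 hk2norm.le hG
      have hka := (coneFact k2 hcone).2 a ha
      have hsup := support_le hk2norm hr₀.le
        (fun y hy => hall' y (hballsubS _ hmem0 hy))
      have e : k2 (θ • x₀) = θ * k2 x₀ := by rw [map_smul, smul_eq_mul]
      rw [e] at hsup
      linarith only [hka, hsup, hlt', hr₀]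
    · push_neg at hG
      obtain ⟨x, hxI, hge⟩ := hG
      have hsign : ∃ σ : ℝ, |σ| = 1 ∧ σ * k2 x ≤ σ * k' x - δ' := by
        rcases le_or_gt (k2 x - k' x) 0 with hc | hc
        · refine ⟨1, by norm_num, ?_⟩
          rw [abs_of_nonpos hc] at hge
          linarith only [hge]
        · refine ⟨-1, by norm_num, ?_⟩
          rw [abs_of_pos hc] at hge
          linarith only [hge]
      obtain ⟨σ, hσ, hσle⟩ := hsign
      have hmem : mkB x σ ∈ L := by
        rw [hLdef]
        apply List.mem_cons_of_mem
        rw [List.mem_flatMap]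
        refine ⟨x, Finset.mem_toList.mpr hxI, ?_⟩
        rcases (abs_eq (by norm_num : (0:ℝ) ≤ 1)).mp hσ with rfl | rfl
        · simp
        · simp
      have hk2w : k2 w ≤ 1 := hw_le k2 hk2norm
      have hk2z : k2 (zc x σ) ≤ βc x σ := by
        rw [hzval, hβval]
        have h1a := mul_le_mul_of_nonneg_left hk2w (hccpos x).le
        linarith only [h1a, hσle]
      have hrpos : (0:ℝ) ≤ max 0 (R + lam x σ * βc x σ) := le_max_left _ _
      have hball2 : closedBall (-(lam x σ) • zc x σ) (max 0 (R + lam x σ * βc x σ)) ⊆ S := by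
        have hb := hballsubS _ hmem
        rw [hmkfst, hmksnd] at hb
        exact hb
      have hsup := support_le hk2norm hrpos
        (fun y hy => hall' y (hball2 hy))
      have e1 : k2 (-(lam x σ) • zc x σ) = -(lam x σ) * k2 (zc x σ) := by
        rw [map_smul, smul_eq_mul]
      rw [e1] at hsup
      have h2 : R ≤ -(lam x σ) * k2 (zc x σ) + max 0 (R + lam x σ * βc x σ) := by
        have h4 := le_max_right (0:ℝ) (R + lam x σ * βc x σ)
        have h3 := mul_le_mul_of_nonneg_left hk2z (hlampos x hxI σ).le
        linarith only [h3, h4]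
      have h5 : k2 a ≤ R := by
        calc k2 a ≤ ‖k2 a‖ := by rw [Real.norm_eq_abs]; exact le_abs_self _
        _ ≤ ‖k2‖ * ‖a‖ := k2.le_opNorm a
        _ ≤ R := by rw [hk2norm, one_mul]; exact hRA a ha
      linarith only [hsup, h2, hlt', h5]
  exact ⟨S, hShull, hAS, hx₀S⟩

end Aux

set_option maxHeartbeats 1000000 in
theorem stmt4' {X : Type*} [NormedAddCommGroup X] [NormedSpace ℝ X] [CompleteSpace X]
    (𝒜 : Set (Set X)) (h𝒜 : IsCompatible 𝒜)
    (hdense : ∀ g : X →L[ℝ] ℝ, ∀ (n : ℕ) (A : Fin n → Set X), (∀ i, A i ∈ 𝒜) →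
      ∀ ε > (0 : ℝ), ∃ h ∈ coneOf {f : X →L[ℝ] ℝ | ‖f‖ = 1 ∧ IsASemiPC 𝒜 f},
        ∀ i, dualSeminormOn (A i) (g - h) < ε) :
    ∀ A ∈ 𝒜, IsClosed A → Convex ℝ A →
      ∃ ℱ : Set (Set X), (∀ S ∈ ℱ, IsFinBallHull S) ∧ A = ⋂₀ ℱ := by
  intro A hA hAc hAv
  rcases A.eq_empty_or_nonempty with rfl | ⟨a₀, ha₀⟩
  · refine ⟨{∅}, ?_, ?_⟩
    · rintro S hS
      rw [Set.mem_singleton_iff] at hS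
      subst hS
      refine ⟨0, Fin.elim0, Fin.elim0, ?_⟩
      rw [Set.iUnion_of_empty, convexHull_empty, closure_empty]
    · rw [Set.sInter_singleton]
  · refine ⟨{S | IsFinBallHull S ∧ A ⊆ S}, fun S hS => hS.1, ?_⟩
    apply Set.Subset.antisymm
    · intro a ha
      rw [Set.mem_sInter]
      intro S hS
      exact hS.2 ha
    · intro y hy
      by_contra hyA
      have hA' : ((fun a => a + (-a₀)) '' A) ∈ 𝒜 := h𝒜.translate_mem A hA (-a₀)
      have h0' : (0:X) ∈ ((fun a => a + (-a₀)) '' A) := ⟨a₀, ha₀, add_neg_cancel a₀⟩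
      have hclosed' : IsClosed ((fun a => a + (-a₀)) '' A) :=
        (Homeomorph.addRight (-a₀)).isClosedMap A hAc
      have hconv' : Convex ℝ ((fun a => a + (-a₀)) '' A) := by
        have e : (fun a : X => a + (-a₀)) = (fun a : X => (-a₀) + a) := by
          funext a; rw [add_comm]
        rw [e]
        exact hAv.translate (-a₀)
      have hy' : y + (-a₀) ∉ ((fun a => a + (-a₀)) '' A) := by
        rintro ⟨a, ha, hEq⟩
        have ha' : a = y := add_right_cancel hEq
        exact hyA (ha' ▸ ha)
      obtain ⟨S', hS'hull, hS'sub, hS'x⟩ :=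
        key_construction 𝒜 h𝒜 hdense _ hA' hclosed' hconv' h0' _ hy'
      have hShull : IsFinBallHull ((fun z => z + a₀) '' S') := hS'hull.translate a₀
      have hAS : A ⊆ (fun z => z + a₀) '' S' := by
        intro a ha
        refine ⟨a + (-a₀), hS'sub ⟨a, ha, rfl⟩, ?_⟩
        show a + (-a₀) + a₀ = a
        abel
      have hyS : y ∈ (fun z => z + a₀) '' S' :=
        Set.mem_sInter.mp hy _ (⟨hShull, hAS⟩ : _ ∧ _)
      obtain ⟨z, hz, hzy⟩ := hyS
      have hzy' : z + a₀ = y := hzy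
      have hzval : z = y + (-a₀) := by rw [← hzy']; abel
      exact hS'x (hzval ▸ hz)


theorem stmt4 {X : Type*} [NormedAddCommGroup X] [NormedSpace ℝ X] [CompleteSpace X]
    (𝒜 : Set (Set X)) (h𝒜 : IsCompatible 𝒜)
    (hdense : ∀ g : X →L[ℝ] ℝ, ∀ (n : ℕ) (A : Fin n → Set X), (∀ i, A i ∈ 𝒜) →
      ∀ ε > (0 : ℝ), ∃ h ∈ coneOf {f : X →L[ℝ] ℝ | ‖f‖ = 1 ∧ IsASemiPC 𝒜 f},
        ∀ i, dualSeminormOn (A i) (g - h) < ε) :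
    HasAPropertyII 𝒜 :=
  stmt4' 𝒜 h𝒜 hdense
end

section
/- Let 𝒜 be a compatible collection of bounded subsets of a Banach space X and f₀ ∈ S_{X*}. Suppose that for any A ∈ 𝒜, β ≥ 0, and x₀ ∈ X with inf f₀(closure(A + βB_X)) > f₀(x₀), there exist finitely many closed balls B₁,…,B_n such that closure(A + βB_X) ⊆ closed convex hull of (B₁ ∪ … ∪ B_n) and x₀ ∉ closed convex hull of (B₁ ∪ … ∪ B_n). Then f₀ is a strong 𝒜-semi point of continuity of B_{X*}. -/
open Metric Set Pointwise

variable {X : Type*} [NormedAddCommGroup X] [NormedSpace ℝ X]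

/- ### Auxiliary lemmas -/

/-- A functional of norm `1` almost attains its norm. -/
lemma exists_unit_apply_gt (f : X →L[ℝ] ℝ) (hf : ‖f‖ = 1) {η : ℝ} (hη : 0 < η) :
    ∃ x : X, ‖x‖ ≤ 1 ∧ 1 - η < f x := by
  have hη' : 0 < min η (1 / 2) := lt_min hη (by norm_num)
  have hle : min η (1 / 2) ≤ η := min_le_left _ _
  have h1 : (1 - min η (1 / 2) : ℝ) < ‖f‖ := by rw [hf]; linarith
  obtain ⟨x, hx, hfx⟩ := f.exists_lt_apply_of_lt_opNorm h1
  rw [Real.norm_eq_abs] at hfx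
  rcases le_or_gt (f x) 0 with h2 | h2
  · refine ⟨-x, by simpa using hx.le, ?_⟩
    rw [map_neg]
    rcases abs_cases (f x) with ⟨he, _⟩ | ⟨he, _⟩ <;> linarith
  · exact ⟨x, hx.le, by rw [abs_of_pos h2] at hfx; linarith⟩

/-- If a functional is bounded above by `b` on the unit ball, its norm is at most `b`. -/
lemma opNorm_le_of_unit_ball (g : X →L[ℝ] ℝ) {b : ℝ}
    (h : ∀ u : X, ‖u‖ ≤ 1 → g u ≤ b) : ‖g‖ ≤ b := by
  have hb : 0 ≤ b := by simpa using h 0 (by simp)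
  refine g.opNorm_le_bound hb fun x => ?_
  rcases eq_or_ne x 0 with rfl | hx
  · simp
  · have hxn : 0 < ‖x‖ := norm_pos_iff.mpr hx
    have hu : ‖(‖x‖⁻¹ • x : X)‖ ≤ 1 := by
      rw [norm_smul, norm_inv, norm_norm, inv_mul_cancel₀ hxn.ne']
    have h1 := h (‖x‖⁻¹ • x) hu
    have h2 := h (-(‖x‖⁻¹ • x)) (by rwa [norm_neg])
    rw [map_smul, smul_eq_mul] at h1
    rw [map_neg, map_smul, smul_eq_mul] at h2
    have e1 : ‖x‖ * (‖x‖⁻¹ * g x) ≤ ‖x‖ * b := mul_le_mul_of_nonneg_left h1 hxn.le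
    have e2 : ‖x‖ * (-(‖x‖⁻¹ * g x)) ≤ ‖x‖ * b := mul_le_mul_of_nonneg_left h2 hxn.le
    rw [← mul_assoc, mul_inv_cancel₀ hxn.ne', one_mul] at e1
    have e2' : -(g x) ≤ ‖x‖ * b := by
      have : ‖x‖ * (-(‖x‖⁻¹ * g x)) = -(‖x‖ * ‖x‖⁻¹ * g x) := by ring
      rw [this, mul_inv_cancel₀ hxn.ne', one_mul] at e2
      exact e2
    rw [Real.norm_eq_abs, abs_le]
    constructor <;> [linarith [e2']; linarith [e1]]

/-- Absolutely convex combination of two points of `s` lies in the absolutely convex hull. -/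
lemma combo_mem_absConvexHull {s : Set X} {a p : X} {t₁ t₂ : ℝ}
    (h : |t₁| + |t₂| ≤ 1) (ha : a ∈ s) (hp : p ∈ s) :
    t₁ • a + t₂ • p ∈ absConvexHull ℝ s := by
  have hbal : Balanced ℝ (absConvexHull ℝ s) := balanced_absConvexHull
  have hconv : Convex ℝ (absConvexHull ℝ s) := convex_absConvexHull
  have haH : a ∈ absConvexHull ℝ s := subset_absConvexHull ha
  have hpH : p ∈ absConvexHull ℝ s := subset_absConvexHull hp
  have hnegaH : -a ∈ absConvexHull ℝ s := by
    simpa using hbal.smul_mem (a := (-1 : ℝ)) (by norm_num) haH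
  have hnegpH : -p ∈ absConvexHull ℝ s := by
    simpa using hbal.smul_mem (a := (-1 : ℝ)) (by norm_num) hpH
  have h0H : (0 : X) ∈ absConvexHull ℝ s := by
    simpa using hbal.smul_mem (a := (0 : ℝ)) (by norm_num) haH
  set e₁ : X := if 0 ≤ t₁ then a else -a with he₁
  set e₂ : X := if 0 ≤ t₂ then p else -p with he₂
  have he₁H : e₁ ∈ absConvexHull ℝ s := by rw [he₁]; split <;> assumption
  have he₂H : e₂ ∈ absConvexHull ℝ s := by rw [he₂]; split <;> assumption
  have key1 : t₁ • a = |t₁| • e₁ := by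
    rw [he₁]; split
    · rw [abs_of_nonneg ‹0 ≤ t₁›]
    · rw [abs_of_neg (lt_of_not_ge ‹¬0 ≤ t₁›), smul_neg, ← neg_smul, neg_neg]
  have key2 : t₂ • p = |t₂| • e₂ := by
    rw [he₂]; split
    · rw [abs_of_nonneg ‹0 ≤ t₂›]
    · rw [abs_of_neg (lt_of_not_ge ‹¬0 ≤ t₂›), smul_neg, ← neg_smul, neg_neg]
  have hmem := hconv.sum_mem (t := (Finset.univ : Finset (Fin 3)))
      (w := ![|t₁|, |t₂|, 1 - |t₁| - |t₂|]) (z := ![e₁, e₂, 0])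
      (by
        intro i _
        fin_cases i
        · simpa using abs_nonneg t₁
        · simpa using abs_nonneg t₂
        · simp
          linarith)
      (by simp [Fin.sum_univ_three])
      (by
        intro i _
        fin_cases i
        · simpa using he₁H
        · simpa using he₂H
        · simpa using h0H)
  rw [Fin.sum_univ_three] at hmem
  simpa [key1, key2] using hmem

set_option maxHeartbeats 2000000 in
theorem stmt7 {X : Type*} [NormedAddCommGroup X] [NormedSpace ℝ X] [CompleteSpace X]
    (𝒜 : Set (Set X)) (h𝒜 : IsCompatible 𝒜)
    (f₀ : X →L[ℝ] ℝ) (hf₀ : ‖f₀‖ = 1)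
    (hsep : ∀ A ∈ 𝒜, ∀ β : ℝ, 0 ≤ β → ∀ x₀ : X,
      f₀ x₀ < sInf (f₀ '' closure (A + β • closedBall (0 : X) 1)) →
      ∃ (n : ℕ) (c : Fin n → X) (r : Fin n → ℝ),
        closure (A + β • closedBall (0 : X) 1) ⊆ closure (convexHull ℝ (⋃ i, closedBall (c i) (r i))) ∧
        x₀ ∉ closure (convexHull ℝ (⋃ i, closedBall (c i) (r i)))) :
    IsStrongASemiPC 𝒜 f₀ := by
  intro A hA ε hε
  -- the bound on A
  obtain ⟨M₀, hM₀⟩ := (h𝒜.bounded A hA).exists_norm_le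
  set M : ℝ := max M₀ 1 with hMdef
  have hM1 : (1 : ℝ) ≤ M := le_max_right _ _
  have hMpos : (0 : ℝ) < M := lt_of_lt_of_le one_pos hM1
  have hMA : ∀ a ∈ A, ‖a‖ ≤ M := fun a ha => (hM₀ a ha).trans (le_max_left _ _)
  -- parameters
  set ρ : ℝ := min (ε / (8 * (M + 1))) (1 / 2) with hρdef
  have hρpos : 0 < ρ := lt_min (by positivity) (by norm_num)
  have hρhalf : ρ ≤ 1 / 2 := min_le_right _ _
  have hρε : ρ ≤ ε / (8 * (M + 1)) := min_le_left _ _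
  set δ : ℝ := ρ / 4 with hδdef
  set σ : ℝ := 1 + ρ / 2 with hσdef
  have hδpos : 0 < δ := by positivity
  have hδ8 : δ ≤ 1 / 8 := by rw [hδdef]; linarith
  have hσpos : 0 < σ := by rw [hσdef]; linarith
  -- the near-norming point
  obtain ⟨x₁, hx₁n, hx₁f⟩ := exists_unit_apply_gt f₀ hf₀ hδpos
  have hfx₁pos : 0 < f₀ x₁ := by linarith
  set z : X := (f₀ x₁)⁻¹ • x₁ with hzdef
  have hfz : f₀ z = 1 := by
    rw [hzdef, map_smul, smul_eq_mul, inv_mul_cancel₀ hfx₁pos.ne']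
  have hznorm : (1 - δ) * ‖z‖ ≤ 1 := by
    have h1 : ‖z‖ = (f₀ x₁)⁻¹ * ‖x₁‖ := by
      rw [hzdef, norm_smul, Real.norm_eq_abs, abs_of_pos (inv_pos.mpr hfx₁pos)]
    have h2 : f₀ x₁ * (f₀ x₁)⁻¹ = 1 := mul_inv_cancel₀ hfx₁pos.ne'
    have h3 : 0 ≤ (f₀ x₁)⁻¹ := (inv_pos.mpr hfx₁pos).le
    have h4 : (1 - δ) * (f₀ x₁)⁻¹ ≤ 1 := by nlinarith
    calc (1 - δ) * ‖z‖ = ((1 - δ) * (f₀ x₁)⁻¹) * ‖x₁‖ := by rw [h1]; ring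
    _ ≤ 1 * 1 := mul_le_mul h4 hx₁n (norm_nonneg _) (by norm_num)
    _ = 1 := by norm_num
  have hz2 : ‖z‖ ≤ 2 := by nlinarith [norm_nonneg z]
  have hMne : (M : ℝ) ≠ 0 := hMpos.ne'
  have hM1ne : (M : ℝ) + 1 ≠ 0 := by positivity
  clear_value z M ρ δ σ
  -- sets K ⊆ Q
  set Q : Set X := closure (absConvexHull ℝ (A ∪ {(2 * M) • z})) with hQdef
  have hQ𝒜 : Q ∈ 𝒜 := h𝒜.closure_absConvexHull_mem _ (h𝒜.union_singleton_mem A hA _)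
  set K : Set X := Q ∩ {x | |f₀ x| ≤ δ} with hKdef
  have hK𝒜 : K ∈ 𝒜 := h𝒜.mem_of_subset Q hQ𝒜 K inter_subset_left
  have hQbal : Balanced ℝ Q := balanced_absConvexHull.closure
  have hKsymm : ∀ k ∈ K, -k ∈ K := by
    rintro k ⟨hk1, hk2⟩
    refine ⟨by simpa using hQbal.smul_mem (a := (-1 : ℝ)) (by norm_num) hk1, ?_⟩
    simpa [abs_neg] using hk2
  have h2MzH : (2 * M) • z ∈ absConvexHull ℝ (A ∪ {(2 * M) • z}) :=
    subset_absConvexHull (by simp)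
  have h0K : (0 : X) ∈ K := by
    refine ⟨subset_closure ?_, by simp [hδpos.le]⟩
    simpa using balanced_absConvexHull.smul_mem (a := (0 : ℝ)) (by norm_num) h2MzH
  -- premise of hsep
  have hpre : f₀ (-(σ • z)) < sInf (f₀ '' closure (K + (1 : ℝ) • closedBall (0 : X) 1)) := by
    have hsub : K + (1 : ℝ) • closedBall (0 : X) 1 ⊆ {w | -(δ + 1) ≤ f₀ w} := by
      rintro w ⟨k, hk, b, hb, rfl⟩
      obtain ⟨u, hu, rfl⟩ := hb
      have hk2 : |f₀ k| ≤ δ := hk.2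
      have hu' : ‖u‖ ≤ 1 := by simpa using hu
      have hfu : |f₀ u| ≤ 1 := by
        rw [← Real.norm_eq_abs]
        calc ‖f₀ u‖ ≤ ‖f₀‖ * ‖u‖ := f₀.le_opNorm u
        _ ≤ 1 := by rw [hf₀, one_mul]; exact hu'
      have hk3 := abs_le.mp hk2
      have hu3 := abs_le.mp hfu
      simp only [mem_setOf_eq, map_add, map_smul, smul_eq_mul, one_mul]
      linarith [hk3.1, hu3.1]
    have hlow : ∀ y ∈ f₀ '' closure (K + (1 : ℝ) • closedBall (0 : X) 1), -(δ + 1) ≤ y := by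
      rintro y ⟨x, hx, rfl⟩
      exact closure_minimal hsub (isClosed_le continuous_const f₀.continuous) hx
    have h1 : -(δ + 1) ≤ sInf (f₀ '' closure (K + (1 : ℝ) • closedBall (0 : X) 1)) :=
      Real.le_sInf hlow (by linarith)
    have h2 : f₀ (-(σ • z)) = -σ := by rw [map_neg, map_smul, smul_eq_mul, hfz, mul_one]
    rw [h2]
    have : δ + 1 < σ := by rw [hδdef, hσdef]; linarith
    linarith
  obtain ⟨n, c, r, hEC, hx₀C⟩ := hsep K hK𝒜 1 zero_le_one (-(σ • z)) hpre
  set C : Set X := closure (convexHull ℝ (⋃ i, closedBall (c i) (r i))) with hCdef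
  have h0E : (0 : X) ∈ closure (K + (1 : ℝ) • closedBall (0 : X) 1) :=
    subset_closure ⟨0, h0K, 0, ⟨0, by simp, smul_zero _⟩, by simp⟩
  have h0C : (0 : X) ∈ C := hEC h0E
  -- separation of x₀ from C
  have hCconv : Convex ℝ C := (convex_convexHull ℝ _).closure
  obtain ⟨φ, u, hφC, hφx⟩ := geometric_hahn_banach_closed_point hCconv isClosed_closure hx₀C
  have hφne : φ ≠ 0 := by
    intro h
    rw [h] at hφC hφx
    have h1 := hφC 0 h0C
    simp at h1 hφx
    linarith
  have hφpos : 0 < ‖φ‖ := norm_pos_iff.mpr hφne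
  obtain ⟨h, hhnorm, u', hhC, hhx⟩ : ∃ h : X →L[ℝ] ℝ, ‖h‖ = 1 ∧ ∃ u' : ℝ,
      (∀ b ∈ C, h b < u') ∧ u' < h (-(σ • z)) := by
    refine ⟨‖φ‖⁻¹ • φ, norm_smul_inv_norm hφne, ‖φ‖⁻¹ * u, fun b hb => ?_, ?_⟩
    · simp only [ContinuousLinearMap.smul_apply, smul_eq_mul]
      exact mul_lt_mul_of_pos_left (hφC b hb) (inv_pos.mpr hφpos)
    · simp only [ContinuousLinearMap.smul_apply, smul_eq_mul]
      exact mul_lt_mul_of_pos_left hφx (inv_pos.mpr hφpos)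
  have hballC : ∀ i, closedBall (c i) (r i) ⊆ C := fun i x hx =>
    subset_closure (subset_convexHull ℝ _ (mem_iUnion.mpr ⟨i, hx⟩))
  -- per-ball bound for the separating functional
  have hhci : ∀ i, 0 ≤ r i → h (c i) + r i ≤ u' := by
    intro i hri
    by_contra hlt
    push_neg at hlt
    have hθ : 0 < h (c i) + r i - u' := by linarith
    have hciC : c i ∈ C := hballC i (mem_closedBall_self hri)
    have hci : h (c i) < u' := hhC _ hciC
    have hrpos : 0 < r i := by
      rcases eq_or_lt_of_le hri with heq | hpos
      · exfalso; rw [← heq] at hθ; linarith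
      · exact hpos
    obtain ⟨v, hv, hvf⟩ := exists_unit_apply_gt h hhnorm
      (div_pos hθ hrpos)
    have hmem : c i + (r i) • v ∈ C := by
      apply hballC i
      rw [mem_closedBall, dist_self_add_left, norm_smul, Real.norm_eq_abs, abs_of_pos hrpos]
      nlinarith
    have hlt2 := hhC _ hmem
    rw [map_add, map_smul, smul_eq_mul] at hlt2
    have h5 : r i * (1 - (h (c i) + r i - u') / r i) < r i * h v :=
      mul_lt_mul_of_pos_left hvf hrpos
    rw [mul_sub, mul_one, mul_div_cancel₀ _ hrpos.ne'] at h5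
    linarith
  -- the key quantitative estimate
  have key : ∀ g : X →L[ℝ] ℝ, ‖g‖ ≤ 1 → (∀ i, 0 ≤ r i → r i - g (c i) < σ * g z) →
      ∀ k ∈ K, -(g k) + ‖g‖ ≤ σ * g z := by
    intro g hg hgi k hk
    have hCb : C ⊆ {y : X | -(g y) ≤ σ * g z} := by
      apply closure_minimal
      · apply convexHull_min
        · intro y hy
          obtain ⟨i, hyi⟩ := mem_iUnion.mp hy
          have hdist : dist y (c i) ≤ r i := mem_closedBall.mp hyi
          have hri : 0 ≤ r i := le_trans dist_nonneg hdist
          have h2 : -(g (y - c i)) ≤ ‖g‖ * ‖y - c i‖ := by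
            calc -(g (y - c i)) ≤ |g (y - c i)| := neg_le_abs _
            _ = ‖g (y - c i)‖ := (Real.norm_eq_abs _).symm
            _ ≤ ‖g‖ * ‖y - c i‖ := g.le_opNorm _
          have h3 : ‖g‖ * ‖y - c i‖ ≤ r i := by
            have h4 : ‖y - c i‖ ≤ r i := by rwa [← dist_eq_norm]
            nlinarith [norm_nonneg (y - c i), norm_nonneg g]
          have h6 := hgi i hri
          have h7 : -(g y) = -(g (c i)) + -(g (y - c i)) := by rw [map_sub]; ring
          simp only [mem_setOf_eq]
          rw [h7]
          linarith
        · exact convex_halfSpace_le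
            ⟨fun x y => by simp only [map_add]; ring,
             fun s x => by simp only [map_smul, smul_eq_mul]; ring⟩ _
      · exact isClosed_le g.continuous.neg continuous_const
    have hub : ∀ v : X, ‖v‖ ≤ 1 → g v ≤ σ * g z + g k := by
      intro v hv
      have hmv : -v ∈ closedBall (0 : X) 1 := by simpa using hv
      have hmem : k + (1 : ℝ) • (-v) ∈ K + (1 : ℝ) • closedBall (0 : X) 1 :=
        add_mem_add hk (smul_mem_smul_set hmv)
      have hmC : k + (1 : ℝ) • (-v) ∈ C := hEC (subset_closure hmem)
      have h8 := hCb hmC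
      simp only [one_smul, map_add, map_neg, mem_setOf_eq] at h8
      linarith
    have h9 := opNorm_le_of_unit_ball g hub
    linarith
  -- the weak*-open set
  set U : Set (X →L[ℝ] ℝ) :=
    {g | 1 - ρ < g z ∧ ∀ i, 0 ≤ r i → r i - g (c i) < σ * g z} with hUdef
  refine ⟨U, ?_, ?_, ?_⟩
  · -- weak*-openness
    have hopen : IsOpen {g : WeakDual ℝ X | 1 - ρ < g z ∧
        ∀ i, 0 ≤ r i → r i - g (c i) < σ * g z} := by
      have h1 : IsOpen {g : WeakDual ℝ X | 1 - ρ < g z} :=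
        isOpen_lt continuous_const (WeakDual.eval_continuous z)
      have h2 : IsOpen {g : WeakDual ℝ X | ∀ i, 0 ≤ r i → r i - g (c i) < σ * g z} := by
        have heq : {g : WeakDual ℝ X | ∀ i, 0 ≤ r i → r i - g (c i) < σ * g z} =
            ⋂ i, {g : WeakDual ℝ X | 0 ≤ r i → r i - g (c i) < σ * g z} := by
          ext g; simp [mem_iInter]
        rw [heq]
        apply isOpen_iInter_of_finite
        intro i
        by_cases hri : 0 ≤ r i
        · have heq2 : {g : WeakDual ℝ X | 0 ≤ r i → r i - g (c i) < σ * g z} =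
              {g : WeakDual ℝ X | r i - g (c i) < σ * g z} := by
            ext g; simp [hri]
          rw [heq2]
          exact isOpen_lt (continuous_const.sub (WeakDual.eval_continuous (c i)))
            (continuous_const.mul (WeakDual.eval_continuous z))
        · have heq2 : {g : WeakDual ℝ X | 0 ≤ r i → r i - g (c i) < σ * g z} = univ := by
            ext g; simp [hri]
          rw [heq2]; exact isOpen_univ
      exact h1.inter h2
    exact hopen
  · -- nonemptiness
    have hcond : ∀ i, 0 ≤ r i → r i - (-h) (c i) < σ * (-h) z := by
      intro i hri
      have h1 := hhci i hri
      have h3 : h (-(σ • z)) = σ * (-h) z := by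
        rw [map_neg, map_smul, smul_eq_mul]
        simp only [ContinuousLinearMap.neg_apply]
        ring
      have h4 : (-h) (c i) = -(h (c i)) := rfl
      rw [h4]
      rw [h3] at hhx
      linarith
    have hnormneg : ‖(-h : X →L[ℝ] ℝ)‖ ≤ 1 := by rw [norm_neg, hhnorm]
    have hkey := key (-h) hnormneg hcond 0 h0K
    rw [map_zero, norm_neg, hhnorm] at hkey
    have hgz0 : 1 ≤ σ * (-h) z := by linarith
    have hUh : (-h : X →L[ℝ] ℝ) ∈ U := by
      refine ⟨?_, hcond⟩
      by_contra hcon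
      push_neg at hcon
      have h9 : σ * (-h) z ≤ σ * (1 - ρ) := mul_le_mul_of_nonneg_left hcon hσpos.le
      rw [hσdef] at h9
      have hgz0' : 1 ≤ σ * (-h) z := hgz0
      rw [hσdef] at hgz0'
      nlinarith [hρpos]
    exact ⟨-h, hUh, by rw [mem_closedBall_zero_iff, norm_neg, hhnorm]⟩
  · -- the inclusion
    rintro g ⟨hgU, hgB⟩
    have hgnorm : ‖g‖ ≤ 1 := mem_closedBall_zero_iff.mp hgB
    obtain ⟨hgz, hgi⟩ := hgU
    have hkey := key g hgnorm hgi
    have hKbound : ∀ k ∈ K, |g k| ≤ σ * g z - ‖g‖ := by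
      intro k hk
      have h1 := hkey k hk
      have h2 := hkey (-k) (hKsymm k hk)
      rw [map_neg] at h2
      rw [abs_le]
      constructor <;> linarith
    have hgzpos : 0 < g z := by linarith
    have hgznorm : g z ≤ ‖g‖ * ‖z‖ := by
      calc g z ≤ |g z| := le_abs_self _
      _ = ‖g z‖ := (Real.norm_eq_abs _).symm
      _ ≤ ‖g‖ * ‖z‖ := g.le_opNorm z
    have hgz2 : g z ≤ 2 := by nlinarith [norm_nonneg z, norm_nonneg g]
    have hgzn : (1 - δ) * g z ≤ ‖g‖ := by
      have hδ1 : (0:ℝ) ≤ 1 - δ := by linarith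
      have h9 : (1 - δ) * g z ≤ (1 - δ) * (‖g‖ * ‖z‖) :=
        mul_le_mul_of_nonneg_left hgznorm hδ1
      have h10 : ‖g‖ * ((1 - δ) * ‖z‖) ≤ ‖g‖ * 1 :=
        mul_le_mul_of_nonneg_left hznorm (norm_nonneg g)
      have e1 : (1 - δ) * (‖g‖ * ‖z‖) = ‖g‖ * ((1 - δ) * ‖z‖) := by ring
      linarith
    -- final estimate
    show g ∈ seminormBall A f₀ ε
    have hbound : ∀ y ∈ (fun x => |(g - f₀) x|) '' A, y ≤ ε / 2 := by
      rintro y ⟨a, haA, rfl⟩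
      have hfa : |f₀ a| ≤ M := by
        rw [← Real.norm_eq_abs]
        calc ‖f₀ a‖ ≤ ‖f₀‖ * ‖a‖ := f₀.le_opNorm a
        _ ≤ M := by rw [hf₀, one_mul]; exact hMA a haA
      set w : X := (1 / 2 : ℝ) • a + (-(f₀ a) / (4 * M)) • ((2 * M) • z) with hwdef
      have hcombo : w ∈ absConvexHull ℝ (A ∪ {(2 * M) • z}) := by
        apply combo_mem_absConvexHull
        · have h2 : |(-(f₀ a) / (4 * M))| = |f₀ a| / (4 * M) := by
            rw [abs_div, abs_neg, abs_of_pos (by linarith : (0:ℝ) < 4 * M)]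
          have h3 : |f₀ a| / (4 * M) ≤ 1 / 4 := by
            rw [div_le_iff₀ (by linarith : (0:ℝ) < 4 * M)]
            nlinarith [abs_nonneg (f₀ a)]
          rw [h2]
          have h4 : |(1 / 2 : ℝ)| = 1 / 2 := by norm_num
          rw [h4]
          linarith
        · exact mem_union_left _ haA
        · exact mem_union_right _ rfl
      have h2z : (-(f₀ a) / (4 * M)) • ((2 * M) • z) = -((1 / 2 : ℝ) • (f₀ a • z)) := by
        rw [smul_smul, smul_smul, ← neg_smul]
        congr 1
        field_simp
        try ring
      have hwsimp : w = (1 / 2 : ℝ) • (a - (f₀ a) • z) := by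
        rw [hwdef, h2z, smul_sub, sub_eq_add_neg]
      have hwK : w ∈ K := by
        refine ⟨subset_closure hcombo, ?_⟩
        have hfw : f₀ w = 0 := by
          rw [hwsimp, map_smul, map_sub, map_smul, hfz, smul_eq_mul, smul_eq_mul, mul_one]
          ring
        simp only [mem_setOf_eq, hfw, abs_zero]
        exact hδpos.le
      have h1 : |g w| ≤ σ * g z - ‖g‖ := hKbound w hwK
      have h2 : g w = (1 / 2) * (g a - f₀ a * g z) := by
        rw [hwsimp, map_smul, map_sub, map_smul, smul_eq_mul, smul_eq_mul]
      have h3 : |g a - f₀ a * g z| ≤ 2 * (σ * g z - ‖g‖) := by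
        have e : g a - f₀ a * g z = 2 * g w := by rw [h2]; ring
        have habs := abs_le.mp h1
        rw [e]
        exact abs_le.mpr ⟨by linarith [habs.1], by linarith [habs.2]⟩
      have h4 : σ * g z - ‖g‖ ≤ (3 / 4) * ρ * g z := by
        have h5 : σ - (1 - δ) = (3 / 4) * ρ := by rw [hσdef, hδdef]; ring
        calc σ * g z - ‖g‖ ≤ σ * g z - (1 - δ) * g z := by linarith
          _ = (σ - (1 - δ)) * g z := by ring
          _ = (3 / 4) * ρ * g z := by rw [h5]
      have h5 : |g z - 1| ≤ ρ := by
        rw [abs_le]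
        constructor
        · linarith
        · -- g z - 1 ≤ ρ : from (1-δ) g z ≤ ... g z ≤ ‖z‖ and (1-δ)‖z‖ ≤ 1
          have h6 : g z ≤ ‖z‖ := by nlinarith [norm_nonneg z, norm_nonneg g]
          have h7 : g z - 1 ≤ 2 * δ := by nlinarith
          rw [hδdef] at h7
          linarith
      have hfinal : (g - f₀) a = (g a - f₀ a * g z) + f₀ a * (g z - 1) := by
        simp only [ContinuousLinearMap.sub_apply]
        ring
      show |(g - f₀) a| ≤ ε / 2
      rw [hfinal]
      calc |(g a - f₀ a * g z) + f₀ a * (g z - 1)|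
          ≤ |g a - f₀ a * g z| + |f₀ a * (g z - 1)| := abs_add_le _ _
        _ ≤ 2 * ((3 / 4) * ρ * g z) + M * ρ := by
            have h10 : |f₀ a * (g z - 1)| ≤ M * ρ := by
              calc |f₀ a * (g z - 1)| = |f₀ a| * |g z - 1| := abs_mul _ _
              _ ≤ M * ρ := mul_le_mul hfa h5 (abs_nonneg _) (by linarith)
            linarith only [h3, h4, h10]
        _ ≤ 2 * ((3 / 4) * ρ * 2) + M * ρ := by nlinarith
        _ = (M + 3) * ρ := by ring
        _ ≤ (M + 3) * (ε / (8 * (M + 1))) := by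
            apply mul_le_mul_of_nonneg_left hρε (by linarith)
        _ ≤ (4 * (M + 1)) * (ε / (8 * (M + 1))) := by
            apply mul_le_mul_of_nonneg_right (by linarith)
            exact div_nonneg hε.le (by linarith)
        _ = ε / 2 := by
            field_simp
            ring
    have hsup : dualSeminormOn A (g - f₀) ≤ ε / 2 := Real.sSup_le hbound (by positivity)
    exact lt_of_le_of_lt hsup (by linarith)
end

section
/- Let X be a Banach space and let 𝒜 consist of all bounded subsets of X. If f₀ ∈ S_{X*} is an 𝒜-semi point of continuity of B_{X*}, then f₀ is a semi weak*-point of continuity of B_{X*}: for each ε > 0 there exists a nonempty weak*-open subset W of B_{X*} with W ⊆ B(f₀, ε) (norm ball in X*). -/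
open Metric Set Pointwise

variable {X : Type*} [NormedAddCommGroup X] [NormedSpace ℝ X]

section Helpers

variable {X : Type*} [NormedAddCommGroup X] [NormedSpace ℝ X]

/-- If the seminorm of `h - f₀` over the closed unit ball is `< θ`, then `‖h - f₀‖ ≤ θ`. -/
lemma norm_le_of_mem_seminormBall {f₀ h : X →L[ℝ] ℝ} {θ : ℝ} (hθ : 0 ≤ θ)
    (hh : h ∈ seminormBall (closedBall (0 : X) 1) f₀ θ) : ‖h - f₀‖ ≤ θ := by
  have key : ∀ x ∈ closedBall (0 : X) 1, |(h - f₀) x| ≤ dualSeminormOn (closedBall (0:X) 1) (h - f₀) := by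
    intro x hx
    apply le_csSup
    · refine ⟨‖h - f₀‖, ?_⟩
      rintro y ⟨z, hz, rfl⟩
      calc |(h - f₀) z| = ‖(h - f₀) z‖ := rfl
        _ ≤ ‖h - f₀‖ * ‖z‖ := (h - f₀).le_opNorm z
        _ ≤ ‖h - f₀‖ * 1 := by
            have : ‖z‖ ≤ 1 := by simpa [mem_closedBall, dist_eq_norm] using hz
            exact mul_le_mul_of_nonneg_left this (norm_nonneg _)
        _ = ‖h - f₀‖ := mul_one _
    · exact ⟨x, hx, rfl⟩
  have hlt : dualSeminormOn (closedBall (0:X) 1) (h - f₀) < θ := hh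
  apply ContinuousLinearMap.opNorm_le_bound _ hθ
  intro x
  rcases eq_or_ne x 0 with rfl | hx0
  · simp
  · have hu : (‖x‖⁻¹ • x) ∈ closedBall (0 : X) 1 := by
      simp [mem_closedBall, dist_eq_norm, norm_smul, abs_of_nonneg (inv_nonneg.2 (norm_nonneg x)),
        inv_mul_cancel₀ (norm_ne_zero_iff.2 hx0)]
    have := (key _ hu).trans hlt.le
    have h1 : |(h - f₀) (‖x‖⁻¹ • x)| = ‖x‖⁻¹ * |(h - f₀) x| := by
      simp [map_smul, abs_mul, abs_of_nonneg (inv_nonneg.2 (norm_nonneg x))]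
    rw [h1] at this
    have hxpos : (0:ℝ) < ‖x‖ := norm_pos_iff.2 hx0
    calc ‖(h - f₀) x‖ = |(h - f₀) x| := rfl
      _ = ‖x‖ * (‖x‖⁻¹ * |(h - f₀) x|) := by
          field_simp
      _ ≤ ‖x‖ * θ := mul_le_mul_of_nonneg_left this hxpos.le
      _ = θ * ‖x‖ := mul_comm _ _

lemma clm_norm_smul (c : ℝ) (f : X →L[ℝ] ℝ) : ‖c • f‖ = |c| * ‖f‖ := by
  rw [← Real.norm_eq_abs]; exact norm_smul c f

end Helpers


set_option maxHeartbeats 1600000 in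
theorem stmt10 {X : Type*} [NormedAddCommGroup X] [NormedSpace ℝ X] [CompleteSpace X]
    (f₀ : X →L[ℝ] ℝ) (hf₀ : ‖f₀‖ = 1)
    (hpc : IsASemiPC {A : Set X | Bornology.IsBounded A} f₀) :
    ∀ ε > (0 : ℝ), ∃ U : Set (X →L[ℝ] ℝ), IsWeakStarOpen U ∧
      (U ∩ closedBall 0 1).Nonempty ∧
      U ∩ closedBall 0 1 ⊆ Metric.ball f₀ ε := by
  intro ε hε
  -- choose a small parameter θ
  set θ : ℝ := min (ε / 18) (1 / 4) with hθdef
  have hθ0 : 0 < θ := lt_min (by linarith) (by norm_num)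
  have hθ4 : θ ≤ 1 / 4 := min_le_right _ _
  have hθε : θ ≤ ε / 18 := min_le_left _ _
  -- choose x₀ with ‖x₀‖ ≤ 1 and f₀ x₀ > 1 - θ
  obtain ⟨x, hx1, hxval⟩ : ∃ x : X, ‖x‖ < 1 ∧ 1 - θ < ‖f₀ x‖ := by
    apply ContinuousLinearMap.exists_lt_apply_of_lt_opNorm
    rw [hf₀]; linarith
  obtain ⟨x₀, hx₀1, hx₀val⟩ : ∃ x₀ : X, ‖x₀‖ ≤ 1 ∧ 1 - θ < f₀ x₀ := by
    rcases le_or_gt 0 (f₀ x) with hc | hc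
    · exact ⟨x, hx1.le, by rwa [Real.norm_eq_abs, abs_of_nonneg hc] at hxval⟩
    · refine ⟨-x, by simpa using hx1.le, ?_⟩
      rw [Real.norm_eq_abs, abs_of_neg hc] at hxval
      simpa using hxval
  have hx₀le : f₀ x₀ ≤ 1 := by
    calc f₀ x₀ ≤ |f₀ x₀| := le_abs_self _
      _ = ‖f₀ x₀‖ := rfl
      _ ≤ ‖f₀‖ * ‖x₀‖ := f₀.le_opNorm x₀
      _ ≤ 1 * 1 := by rw [hf₀]; exact mul_le_mul_of_nonneg_left hx₀1 zero_le_one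
      _ = 1 := one_mul _
  -- apply the semi-PC hypothesis with A = closed unit ball
  obtain ⟨U₀, hU₀o, ⟨g₀, hg₀⟩, hsub⟩ :=
    hpc (closedBall (0 : X) 1) (Metric.isBounded_closedBall) θ hθ0
  -- decoding cone membership
  have decode : ∀ g ∈ U₀ ∩ closedBall (0 : X →L[ℝ] ℝ) 1, ∃ l : ℝ, 0 < l ∧
      ∃ h : X →L[ℝ] ℝ, ‖h - f₀‖ ≤ θ ∧ g = l • h := by
    intro g hg
    obtain ⟨l, hl, h, hh, rfl⟩ := hsub hg
    exact ⟨l, hl, h, norm_le_of_mem_seminormBall hθ0.le hh, rfl⟩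
  -- basic facts about h with ‖h - f₀‖ ≤ θ
  have hfacts : ∀ h : X →L[ℝ] ℝ, ‖h - f₀‖ ≤ θ →
      1 - 2*θ < h x₀ ∧ h x₀ ≤ 1 + θ ∧ 1 - θ ≤ ‖h‖ ∧ ‖h‖ ≤ 1 + θ := by
    intro h hh
    have hev : |h x₀ - f₀ x₀| ≤ θ := by
      calc |h x₀ - f₀ x₀| = ‖(h - f₀) x₀‖ := by simp
        _ ≤ ‖h - f₀‖ * ‖x₀‖ := (h - f₀).le_opNorm x₀
        _ ≤ θ * 1 := mul_le_mul hh hx₀1 (norm_nonneg _) hθ0.le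
        _ = θ := mul_one _
    have h1 := abs_le.1 hev
    have hnorm : |‖h‖ - ‖f₀‖| ≤ θ := (abs_norm_sub_norm_le h f₀).trans hh
    have h2 := abs_le.1 hnorm
    rw [hf₀] at h2
    exact ⟨by linarith, by linarith, by linarith, by linarith⟩
  -- the supremum s
  set S : Set ℝ := (fun g : X →L[ℝ] ℝ => g x₀) '' (U₀ ∩ closedBall 0 1) with hSdef
  have hSne : S.Nonempty := ⟨g₀ x₀, g₀, hg₀, rfl⟩
  have hSbdd : BddAbove S := by
    refine ⟨1, ?_⟩
    rintro y ⟨g, hg, rfl⟩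
    have hgnorm : ‖g‖ ≤ 1 := by
      simpa [mem_closedBall, dist_eq_norm] using hg.2
    calc g x₀ ≤ |g x₀| := le_abs_self _
      _ = ‖g x₀‖ := rfl
      _ ≤ ‖g‖ * ‖x₀‖ := g.le_opNorm x₀
      _ ≤ 1 * 1 := mul_le_mul hgnorm hx₀1 (norm_nonneg _) zero_le_one
      _ = 1 := one_mul _
  set s : ℝ := sSup S with hsdef
  have hθhalf : (0:ℝ) < 1 - 2*θ := by linarith
  have hs0 : 0 < s := by
    obtain ⟨l₀, hl₀, h₀, hh₀, hg₀eq⟩ := decode g₀ hg₀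
    have hh₀x := (hfacts h₀ hh₀).1
    have : 0 < g₀ x₀ := by
      rw [hg₀eq]
      simp only [ContinuousLinearMap.smul_apply, smul_eq_mul]
      nlinarith
    exact this.trans_le (le_csSup hSbdd ⟨g₀, hg₀, rfl⟩)
  -- pick g₁ near the supremum
  obtain ⟨y, ⟨g₁, hg₁mem, rfl⟩, hg₁x⟩ : ∃ y ∈ S, s * (1 - θ) < y := by
    apply exists_lt_of_lt_csSup hSne
    nlinarith
  set t : ℝ := ‖g₁‖ with htdef
  have hg₁norm : ‖g₁‖ ≤ 1 := by simpa [mem_closedBall, dist_eq_norm] using hg₁mem.2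
  have htle1 : t ≤ 1 := hg₁norm
  have hg₁xle : g₁ x₀ ≤ t := by
    calc g₁ x₀ ≤ |g₁ x₀| := le_abs_self _
      _ = ‖g₁ x₀‖ := rfl
      _ ≤ ‖g₁‖ * ‖x₀‖ := g₁.le_opNorm x₀
      _ ≤ ‖g₁‖ * 1 := mul_le_mul_of_nonneg_left hx₀1 (norm_nonneg _)
      _ = t := mul_one _
  have ht0 : 0 < t := lt_of_le_of_lt (by nlinarith) (hg₁x.trans_le hg₁xle)
  -- upper bound for t
  have ht_up : t * (1 - 2*θ) ≤ s * (1 + θ) := by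
    obtain ⟨l₁, hl₁, h₁, hh₁, hg₁eq⟩ := decode g₁ hg₁mem
    obtain ⟨hh₁x, hh₁x', hh₁n, hh₁n'⟩ := hfacts h₁ hh₁
    have hval : g₁ x₀ = l₁ * h₁ x₀ := by
      rw [hg₁eq]; simp [smul_eq_mul]
    have hvx : l₁ * h₁ x₀ ≤ s := by
      rw [← hval]; exact le_csSup hSbdd ⟨g₁, hg₁mem, rfl⟩
    have htn : t = l₁ * ‖h₁‖ := by
      rw [htdef, hg₁eq, clm_norm_smul, abs_of_pos hl₁]
    nlinarith [mul_pos hl₁ (lt_of_lt_of_le hθhalf hh₁x.le)]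
  -- the final open set
  set W' : Set (X →L[ℝ] ℝ) := U₀ ∩ {g | s * (1 - θ) < g x₀} with hW'def
  refine ⟨(fun g : X →L[ℝ] ℝ => t • g) ⁻¹' W', ?_, ?_, ?_⟩
  · -- weak* open
    have hslice : IsOpen (show Set (WeakDual ℝ X) from {g : X →L[ℝ] ℝ | s * (1 - θ) < g x₀}) := by
      have : Continuous fun g : WeakDual ℝ X => g x₀ := WeakDual.eval_continuous x₀
      exact isOpen_lt continuous_const this
    have hW'o : IsOpen (show Set (WeakDual ℝ X) from W') := hU₀o.inter hslice
    exact hW'o.preimage (WeakDual.continuous_of_continuous_eval (fun x => continuous_const.mul (WeakDual.eval_continuous x)))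
  · -- nonempty
    refine ⟨t⁻¹ • g₁, ?_, ?_⟩
    · show t • (t⁻¹ • g₁) ∈ W'
      rw [smul_smul, mul_inv_cancel₀ ht0.ne', one_smul]
      exact ⟨hg₁mem.1, hg₁x⟩
    · rw [mem_closedBall, dist_zero_right, clm_norm_smul, abs_of_pos (inv_pos.2 ht0)]
      rw [inv_mul_le_iff₀ ht0, mul_one]
  · -- inclusion into the norm ball
    rintro g ⟨hgU, hgB⟩
    have hgnorm : ‖g‖ ≤ 1 := by simpa [mem_closedBall, dist_eq_norm] using hgB
    have hg'mem : t • g ∈ U₀ ∩ closedBall 0 1 := by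
      refine ⟨hgU.1, ?_⟩
      rw [mem_closedBall, dist_zero_right, clm_norm_smul, abs_of_pos ht0]
      nlinarith
    obtain ⟨l, hl, h, hh, hgeq⟩ := decode _ hg'mem
    obtain ⟨hhx, hhx', hhn, hhn'⟩ := hfacts h hh
    -- bounds on l
    have hval : l * h x₀ > s * (1 - θ) := by
      have : (t • g) x₀ = l * h x₀ := by rw [hgeq]; simp [smul_eq_mul]
      rw [← this]
      exact hgU.2
    have hlnorm : l * ‖h‖ ≤ t := by
      have h1 : ‖t • g‖ = l * ‖h‖ := by
        rw [hgeq, clm_norm_smul, abs_of_pos hl]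
      have h2 : ‖t • g‖ ≤ t := by
        rw [clm_norm_smul, abs_of_pos ht0]; nlinarith
      linarith [h1 ▸ h2]
    -- g = μ • h with μ = l / t
    set μ : ℝ := l / t with hμdef
    have hμ0 : 0 < μ := div_pos hl ht0
    have hgμ : g = μ • h := by
      have : t⁻¹ • (t • g) = t⁻¹ • (l • h) := by rw [hgeq]
      rwa [smul_smul, smul_smul, inv_mul_cancel₀ ht0.ne', one_smul, ← div_eq_inv_mul] at this
    -- bounds on μ
    have hμ_up : μ * (1 - θ) ≤ 1 := by
      rw [hμdef, div_mul_eq_mul_div, div_le_one ht0]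
      nlinarith
    have hμ_low : (1 - 2*θ) * (1 - θ) < μ * (1 + θ)^2 := by
      have hl_low : l * (1 + θ) > s * (1 - θ) := by nlinarith
      have h2 : l * (1 + θ)^2 > t * (1 - 2*θ) * (1 - θ) := by nlinarith
      rw [hμdef, div_mul_eq_mul_div, lt_div_iff₀ ht0]
      nlinarith
    -- final estimate
    rw [mem_ball, dist_eq_norm, hgμ]
    have hest : ‖μ • h - f₀‖ ≤ μ * θ + |μ - 1| := by
      calc ‖μ • h - f₀‖ = ‖μ • (h - f₀) + (μ - 1) • f₀‖ := by
            congr 1; module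
        _ ≤ ‖μ • (h - f₀)‖ + ‖(μ - 1) • f₀‖ := norm_add_le _ _
        _ = μ * ‖h - f₀‖ + |μ - 1| * ‖f₀‖ := by
            rw [clm_norm_smul, clm_norm_smul, abs_of_pos hμ0]
        _ ≤ μ * θ + |μ - 1| := by
            rw [hf₀, mul_one]
            exact add_le_add (mul_le_mul_of_nonneg_left hh hμ0.le) le_rfl
    refine lt_of_le_of_lt hest ?_
    rcases le_or_gt 1 μ with hc | hc
    · rw [abs_of_nonneg (by linarith)]
      nlinarith
    · rw [abs_of_neg (by linarith)]
      nlinarith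
end

section
/- Every Banach space X has strong 𝒦-Property (II): for every convex compact (more generally, every convex member of the compatible collection 𝒦 generated by compact convex sets) K and every β ≥ 0 such that closure(K + βB_X) is a proper closed convex set, closure(K + βB_X) is an intersection of closed convex hulls of finitely many closed balls. -/
open Metric Set Pointwise

variable {X : Type*} [NormedAddCommGroup X] [NormedSpace ℝ X]

/-- `𝒦`: the smallest compatible collection containing all compact convex sets. -/
def KColl (X : Type*) [NormedAddCommGroup X] [NormedSpace ℝ X] : Set (Set X) :=
  ⋂₀ {𝒜 : Set (Set X) | IsCompatible 𝒜 ∧ ∀ K : Set X, IsCompact K → Convex ℝ K → K ∈ 𝒜}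


lemma totallyBounded_of_mem_KColl {X : Type*} [NormedAddCommGroup X] [NormedSpace ℝ X]
    {K : Set X} (hK : K ∈ KColl X) : TotallyBounded K := by
  have hcomp : IsCompatible {A : Set X | TotallyBounded A} := by
    constructor
    · intro A hA; exact hA.isBounded
    · intro A hA C hCA; exact hA.subset hCA
    · intro A hA x
      exact TotallyBounded.image hA ((uniformContinuous_id.add uniformContinuous_const))
    · intro A hA x
      rw [Set.mem_setOf_eq, totallyBounded_union]
      exact ⟨hA, (Set.finite_singleton x).totallyBounded⟩
    · intro A hA
      exact (totallyBounded_absConvexHull.2 hA).closure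
  exact hK _ ⟨hcomp, fun K hK _ => hK.totallyBounded⟩

lemma opNorm_le_of_forall_closedBall {X : Type*} [NormedAddCommGroup X] [NormedSpace ℝ X]
    (f : X →L[ℝ] ℝ) {c : ℝ} (h : ∀ b ∈ closedBall (0 : X) 1, f b < c) : ‖f‖ ≤ c := by
  have hc0 : 0 ≤ c := by
    have := h 0 (by simp)
    simpa using this.le
  refine f.opNorm_le_bound hc0 fun y => ?_
  rcases eq_or_ne y 0 with rfl | hy
  · simp
  · have hny : 0 < ‖y‖ := norm_pos_iff.2 hy
    have hnb : ‖‖y‖⁻¹ • y‖ = 1 := by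
      rw [norm_smul, Real.norm_eq_abs, abs_of_nonneg (inv_nonneg.2 hny.le),
        inv_mul_cancel₀ hny.ne']
    have hb : ‖y‖⁻¹ • y ∈ closedBall (0 : X) 1 := by
      simp [mem_closedBall, dist_zero_right, hnb]
    have hb' : -(‖y‖⁻¹ • y) ∈ closedBall (0 : X) 1 := by
      simpa [norm_smul, abs_of_nonneg (inv_nonneg.2 hny.le)] using hb
    have h1 := (h _ hb).le
    have h2 := (h _ hb').le
    have habs : |f (‖y‖⁻¹ • y)| ≤ c := by
      rw [abs_le]
      constructor
      · have : f (-(‖y‖⁻¹ • y)) = -f (‖y‖⁻¹ • y) := map_neg f _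
        linarith [h2, this ▸ h2]
      · exact h1
    have : |f y| = ‖y‖ * |f (‖y‖⁻¹ • y)| := by
      rw [map_smul, smul_eq_mul, abs_mul, abs_of_nonneg (inv_nonneg.2 hny.le)]
      field_simp
    calc |f y| = ‖y‖ * |f (‖y‖⁻¹ • y)| := this
    _ ≤ ‖y‖ * c := by gcongr
    _ = c * ‖y‖ := mul_comm _ _

theorem stmt14 {X : Type*} [NormedAddCommGroup X] [NormedSpace ℝ X] [CompleteSpace X] :
    ∀ K ∈ KColl X, Convex ℝ K → ∀ β : ℝ, 0 ≤ β → closure (K + β • closedBall (0 : X) 1) ≠ Set.univ →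
      ∃ ℱ : Set (Set X), (∀ S ∈ ℱ, IsFinBallHull S) ∧ closure (K + β • closedBall (0 : X) 1) = ⋂₀ ℱ := by
  intro K hKmem hKconv β hβ _
  set C := closure (K + β • closedBall (0 : X) 1) with hC
  have hKtb : TotallyBounded K := totallyBounded_of_mem_KColl hKmem
  have hKcl : IsCompact (closure K) := TotallyBounded.isCompact_of_isClosed hKtb.closure isClosed_closure
  have hCconv : Convex ℝ C :=
    (hKconv.add ((convex_closedBall (0 : X) 1).smul β)).closure
  have hCcl : IsClosed C := isClosed_closure
  refine ⟨{S | IsFinBallHull S ∧ C ⊆ S}, fun S hS => hS.1, ?_⟩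
  apply Set.Subset.antisymm
  · exact Set.subset_sInter fun S hS => hS.2
  · intro x hx
    by_contra hxC
    obtain ⟨f, u, hfu, hux⟩ := geometric_hahn_banach_closed_point hCconv hCcl hxC
    -- bound f on closure K
    have hfK : ∀ k ∈ closure K, f k ≤ u - β * ‖f‖ := by
      have hK' : ∀ k ∈ K, f k ≤ u - β * ‖f‖ := by
        intro k hk
        rcases eq_or_lt_of_le hβ with hβ0 | hβ0
        · have : f k < u := by
            have hmem : k ∈ K + β • closedBall (0 : X) 1 := by
              refine ⟨k, hk, β • 0, Set.smul_mem_smul_set (by simp), by simp⟩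
            exact hfu k (subset_closure hmem)
          simp [← hβ0]; linarith
        · have hnorm : ‖f‖ ≤ (u - f k) / β := by
            apply opNorm_le_of_forall_closedBall
            intro b hb
            have hmem : k + β • b ∈ K + β • closedBall (0 : X) 1 :=
              ⟨k, hk, β • b, Set.smul_mem_smul_set hb, rfl⟩
            have := hfu _ (subset_closure hmem)
            rw [map_add, map_smul, smul_eq_mul] at this
            rw [lt_div_iff₀ hβ0]
            linarith [this]
          rw [le_div_iff₀ hβ0] at hnorm
          linarith [hnorm]
      intro k hk
      have hclosed : IsClosed {y : X | f y ≤ u - β * ‖f‖} :=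
        isClosed_le f.continuous continuous_const
      exact closure_minimal hK' hclosed hk
    have hδpos : 0 < (f x - u) / (‖f‖ + 1) := by
      apply div_pos (by linarith) (by positivity)
    set δ := (f x - u) / (‖f‖ + 1) with hδ
    -- cover closure K by finitely many δ-balls centered in closure K
    obtain ⟨t, hts, htfin, htcov⟩ := hKcl.finite_cover_balls hδpos
    haveI := htfin.fintype
    set n := Fintype.card t with hn
    set e : Fin n ≃ t := (Fintype.equivFin t).symm
    set c : Fin n → X := fun i => (e i : X) with hc
    set S := closure (convexHull ℝ (⋃ i, closedBall (c i) (β + δ))) with hS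
    have hSball : IsFinBallHull S := ⟨n, c, fun _ => β + δ, rfl⟩
    have hCS : C ⊆ S := by
      apply closure_minimal _ isClosed_closure
      intro y hy
      obtain ⟨k, hk, z, hz, rfl⟩ := hy
      obtain ⟨b, hb, rfl⟩ := hz
      obtain ⟨w, hw, hkw⟩ := Set.mem_iUnion₂.1 (htcov (subset_closure hk))
      apply subset_closure
      apply subset_convexHull
      refine Set.mem_iUnion.2 ⟨e.symm ⟨w, hw⟩, ?_⟩
      have hcw : c (e.symm ⟨w, hw⟩) = w := by simp [hc]
      rw [mem_closedBall, hcw]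
      calc dist (k + β • b) w ≤ dist (k + β • b) k + dist k w := dist_triangle _ _ _
      _ = ‖β • b‖ + dist k w := by rw [dist_eq_norm, add_sub_cancel_left]
      _ ≤ β * 1 + δ := by
          refine add_le_add ?_ (le_of_lt hkw)
          rw [norm_smul, Real.norm_eq_abs, abs_of_nonneg hβ]
          exact mul_le_mul_of_nonneg_left (by simpa using hb) hβ
      _ = β + δ := by ring
    have hxS : x ∈ S := hx S ⟨hSball, hCS⟩
    -- bound f on S
    have hfS : ∀ y ∈ S, f y ≤ u + δ * ‖f‖ := by
      have hT : convexHull ℝ (⋃ i, closedBall (c i) (β + δ)) ⊆ {y : X | f y ≤ u + δ * ‖f‖} := by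
        apply convexHull_min _ (convex_halfSpace_le ⟨map_add f, map_smul f⟩ _)
        intro y hy
        obtain ⟨i, hi⟩ := Set.mem_iUnion.1 hy
        have hci : f (c i) ≤ u - β * ‖f‖ := hfK _ (hts (e i).2)
        have hfd : f y - f (c i) ≤ ‖f‖ * (β + δ) := by
          have := f.le_opNorm (y - c i)
          have hd : ‖y - c i‖ ≤ β + δ := by rwa [← dist_eq_norm, ← mem_closedBall]
          have h2 : f y - f (c i) ≤ |f (y - c i)| := by
            rw [map_sub] at *; exact le_abs_self _
          calc f y - f (c i) ≤ |f (y - c i)| := h2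
          _ = ‖f (y - c i)‖ := rfl
          _ ≤ ‖f‖ * ‖y - c i‖ := this
          _ ≤ ‖f‖ * (β + δ) := by
              apply mul_le_mul_of_nonneg_left hd (norm_nonneg f)
        have : f y ≤ u + δ * ‖f‖ := by nlinarith [norm_nonneg f]
        exact this
      intro y hy
      have hclosed : IsClosed {y : X | f y ≤ u + δ * ‖f‖} :=
        isClosed_le f.continuous continuous_const
      exact closure_minimal hT hclosed hy
    have hfinal : f x ≤ u + δ * ‖f‖ := hfS x hxS
    have hδsmall : δ * ‖f‖ < f x - u := by
      have h1 : δ * (‖f‖ + 1) = f x - u := by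
        rw [hδ]; field_simp
      nlinarith [hδpos]
    linarith
end
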